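/- arXiv:1409.4279 — 9 statements merged into one kernel-verified Lean document; each statement's English description precedes it below -/
import Mathlib

section
/- Let A be a real n×p matrix with full column rank p (p < n), let y ∈ ℝⁿ, let z* minimize ‖y − Az‖₂ over z ∈ ℝᵖ, and set r = y − Az*. If r_j ≠ 0 for some index j, then the least-squares residual of the augmented problem is strictly smaller: inf over (z, c) ∈ ℝᵖ × ℝ of ‖y − Az − c·e_j‖₂ < ‖r‖₂. In particular, the norm of the residual produced by the GARD iteration is strictly decreasing. -/
open Matrix

/-- Euclidean (ℓ₂) norm of a finitely-indexed real vector. -/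
noncomputable def norm2 {ι : Type*} [Fintype ι] (v : ι → ℝ) : ℝ :=
  Real.sqrt (∑ i, v i ^ 2)

/-- If the least-squares residual `r = y - A z*` has a nonzero `j`-th entry, then the
least-squares residual of the problem augmented with the column `e_j` is strictly smaller:
the infimum over `(z, c)` of `‖y - A z - c e_j‖₂` is strictly below `‖r‖₂`. -/
theorem stmt1 {n p : ℕ} (hpn : p < n)
    (A : Matrix (Fin n) (Fin p) ℝ) (hA : Function.Injective A.mulVec)
    (y : Fin n → ℝ) (zstar : Fin p → ℝ)
    (hmin : ∀ z : Fin p → ℝ, norm2 (y - A.mulVec zstar) ≤ norm2 (y - A.mulVec z))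
    (j : Fin n) (hr : (y - A.mulVec zstar) j ≠ 0) :
    ∃ (z : Fin p → ℝ) (c : ℝ),
      norm2 (y - A.mulVec z - c • (Pi.single j (1 : ℝ) : Fin n → ℝ))
        < norm2 (y - A.mulVec zstar) := by
  set r := y - A.mulVec zstar with hrdef
  refine ⟨zstar, r j, ?_⟩
  have hw : ∀ i, (y - A.mulVec zstar - r j • (Pi.single j (1:ℝ) : Fin n → ℝ)) i
      = if i = j then 0 else r i := by
    intro i
    by_cases h : i = j <;>
      simp [h, Pi.single_apply, hrdef, Pi.sub_apply]
  unfold norm2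
  apply Real.sqrt_lt_sqrt
  · positivity
  · have h1 : ∑ i, (y - A.mulVec zstar - r j • (Pi.single j (1:ℝ) : Fin n → ℝ)) i ^ 2
        = ∑ i ∈ Finset.univ.erase j, r i ^ 2 := by
      rw [← Finset.add_sum_erase _ _ (Finset.mem_univ j), hw j, if_pos rfl]
      rw [zero_pow two_ne_zero, zero_add]
      refine Finset.sum_congr rfl fun i hi => by
        rw [hw i, if_neg (Finset.ne_of_mem_erase hi)]
    rw [h1]
    have h2 : ∑ i, r i ^ 2 = r j ^ 2 + ∑ i ∈ Finset.univ.erase j, r i ^ 2 :=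
      (Finset.add_sum_erase _ _ (Finset.mem_univ j)).symm
    rw [h2]
    have : 0 < r j ^ 2 := by positivity
    linarith
end

section
/- Uniqueness of the decomposition: let Q ∈ ℝ^{n×m} have orthonormal columns (QᵀQ = Iₘ), and let δ ∈ [0,1) be a constant such that |⟨Qw, v⟩| ≤ δ ‖Qw‖₂ ‖v‖₂ for every w ∈ ℝᵐ and every 2s-sparse v ∈ ℝⁿ. If Qw₁ + u₁ = Qw₂ + u₂ where u₁, u₂ ∈ ℝⁿ are both at most s-sparse, then w₁ = w₂ and u₁ = u₂. In other words, if δ_{2s} < 1 then a decomposition y = Qw₀ + u₀ with u₀ at most s-sparse is unique. -/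
open Matrix

/-- A vector of `ℝⁿ` is `s`-sparse if it has at most `s` nonzero entries. -/
def Sparse {n : ℕ} (s : ℕ) (v : Fin n → ℝ) : Prop :=
  ∃ T : Finset (Fin n), T.card ≤ s ∧ ∀ i ∉ T, v i = 0

/-- `δ` satisfies the principal-angle bound for `Q` at sparsity level `s`:
`|⟨Qw, v⟩| ≤ δ ‖Qw‖₂ ‖v‖₂` for every `w` and every `s`-sparse `v`. -/
def PABound {n m : ℕ} (Q : Matrix (Fin n) (Fin m) ℝ) (s : ℕ) (δ : ℝ) : Prop :=
  ∀ (w : Fin m → ℝ) (v : Fin n → ℝ), Sparse s v →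
    |Q.mulVec w ⬝ᵥ v| ≤ δ * norm2 (Q.mulVec w) * norm2 v

/-- The `n × |S|` matrix `I_S` whose columns are the standard basis vectors `e_j`, `j ∈ S`. -/
def colSel {n : ℕ} (S : Finset (Fin n)) : Matrix (Fin n) {i // i ∈ S} ℝ :=
  Matrix.of fun i j => if i = (j : Fin n) then 1 else 0

/-- `F_S(a) = I_S I_Sᵀ a`: the vector agreeing with `a` on `S` and zero elsewhere. -/
def restrictVec {n : ℕ} (S : Finset (Fin n)) (a : Fin n → ℝ) : Fin n → ℝ :=
  fun i => if i ∈ S then a i else 0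

/-- Uniqueness of the decomposition `y = Qw + u` with `u` at most `s`-sparse, when the
principal-angle constant for sparsity level `2s` satisfies `δ < 1`. -/
theorem stmt2 {n m s : ℕ} (Q : Matrix (Fin n) (Fin m) ℝ) (hQ : Qᵀ * Q = 1)
    (δ : ℝ) (hδ0 : 0 ≤ δ) (hδ1 : δ < 1) (hPA : PABound Q (2 * s) δ)
    (w₁ w₂ : Fin m → ℝ) (u₁ u₂ : Fin n → ℝ)
    (hu₁ : Sparse s u₁) (hu₂ : Sparse s u₂)
    (heq : Q.mulVec w₁ + u₁ = Q.mulVec w₂ + u₂) :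
    w₁ = w₂ ∧ u₁ = u₂ := by
  set w : Fin m → ℝ := w₁ - w₂ with hw
  set u : Fin n → ℝ := u₂ - u₁ with hu
  have hQw : Q.mulVec w = u := by
    funext i
    have := congrFun heq i
    simp only [Pi.add_apply] at this
    simp [hw, hu, Matrix.mulVec_sub]
    linarith
  -- u is 2s-sparse
  obtain ⟨T₁, hT₁c, hT₁⟩ := hu₁
  obtain ⟨T₂, hT₂c, hT₂⟩ := hu₂
  have hsp : Sparse (2 * s) u := by
    refine ⟨T₁ ∪ T₂, ?_, ?_⟩
    · calc (T₁ ∪ T₂).card ≤ T₁.card + T₂.card := Finset.card_union_le _ _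
        _ ≤ 2 * s := by omega
    · intro i hi
      simp only [Finset.mem_union, not_or] at hi
      simp [hu, hT₁ i hi.1, hT₂ i hi.2]
  have hPAu := hPA w u hsp
  rw [hQw] at hPAu
  have hsum : u ⬝ᵥ u = ∑ i, u i ^ 2 := by
    simp [dotProduct, sq]
  have hnn : 0 ≤ ∑ i, u i ^ 2 := Finset.sum_nonneg fun i _ => sq_nonneg _
  have hN : norm2 u ^ 2 = ∑ i, u i ^ 2 := Real.sq_sqrt hnn
  have hNnn : 0 ≤ norm2 u := Real.sqrt_nonneg _
  have habs : |u ⬝ᵥ u| = norm2 u ^ 2 := by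
    rw [hsum, ← hN, abs_of_nonneg (by rw [hN]; exact hnn)]
  rw [habs] at hPAu
  have hN0 : norm2 u = 0 := by
    by_contra h
    have hpos : 0 < norm2 u := lt_of_le_of_ne hNnn (Ne.symm h)
    rw [pow_two] at hPAu
    nlinarith [mul_pos hpos hpos]
  have hu0 : u = 0 := by
    have : ∑ i, u i ^ 2 = 0 := by rw [← hN, hN0]; ring
    funext i
    have := (Finset.sum_eq_zero_iff_of_nonneg (fun i _ => sq_nonneg (u i))).mp this i (Finset.mem_univ i)
    exact pow_eq_zero_iff (by norm_num) |>.mp this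
  have hu12 : u₁ = u₂ := by
    funext i
    have := congrFun hu0 i
    simp [hu] at this
    linarith
  have hw0 : w = 0 := by
    have h1 : Q.mulVec w = 0 := by rw [hQw, hu0]
    have h2 : Qᵀ.mulVec (Q.mulVec w) = 0 := by rw [h1]; simp
    rwa [Matrix.mulVec_mulVec, hQ, Matrix.one_mulVec] at h2
  refine ⟨?_, hu12⟩
  funext i
  have := congrFun hw0 i
  simp [hw] at this
  linarith
end

section
/- Let Q ∈ ℝ^{n×m} have orthonormal columns (QᵀQ = Iₘ), let δ ∈ [0,1] satisfy the principal-angle bound for sparsity level s, and let S, S′ ⊆ {1,…,n} with |S| ≤ s. Then for every s-sparse vector v ∈ ℝⁿ (whose support need not be contained in S) one has ‖I_Sᵀ Q Qᵀ v‖₂ ≤ δ² ‖v‖₂. -/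
open Matrix

lemma norm2_nonneg' {ι : Type*} [Fintype ι] (v : ι → ℝ) : 0 ≤ norm2 v :=
  Real.sqrt_nonneg _

lemma norm2_sq' {ι : Type*} [Fintype ι] (v : ι → ℝ) : norm2 v ^ 2 = ∑ i, v i ^ 2 :=
  Real.sq_sqrt (Finset.sum_nonneg fun i _ => sq_nonneg _)

lemma le_of_sq_le' (x c : ℝ) (hx : 0 ≤ x) (hc : 0 ≤ c) (h : x ^ 2 ≤ c * x) : x ≤ c := by
  rcases eq_or_lt_of_le hx with h0 | h0
  · linarith
  · nlinarith

lemma dot_mulVec' {n m : ℕ} (A : Matrix (Fin n) (Fin m) ℝ) (a : Fin m → ℝ) (b : Fin n → ℝ) :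
    A.mulVec a ⬝ᵥ b = a ⬝ᵥ Aᵀ.mulVec b := by
  simp only [mulVec, dotProduct, transpose_apply, Finset.sum_mul, Finset.mul_sum]
  rw [Finset.sum_comm]
  congr 1; ext j; congr 1; ext i; ring

/-- For any index sets `S, S'` with `|S| ≤ s` and any `s`-sparse vector `v` (whose support
need not be contained in `S`), one has `‖I_Sᵀ Q Qᵀ v‖₂ ≤ δ² ‖v‖₂`. -/
theorem stmt5 {n m s : ℕ} (Q : Matrix (Fin n) (Fin m) ℝ) (hQ : Qᵀ * Q = 1)
    (δ : ℝ) (hδ0 : 0 ≤ δ) (hδ1 : δ ≤ 1) (hPA : PABound Q s δ)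
    (S S' : Finset (Fin n)) (hcard : S.card ≤ s) :
    ∀ v : Fin n → ℝ, Sparse s v →
      norm2 ((colSel S)ᵀ.mulVec (Q.mulVec (Qᵀ.mulVec v))) ≤ δ ^ 2 * norm2 v := by
  intro v hv
  set w := Qᵀ.mulVec v with hw
  set u := Q.mulVec w with hu
  set x := restrictVec S u with hxdef
  have hx_sparse : Sparse s x := ⟨S, hcard, fun i hi => by simp [hxdef, restrictVec, hi]⟩
  have hsumS : ∑ i, x i ^ 2 = ∑ i ∈ S, u i ^ 2 := by
    simp only [hxdef, restrictVec]
    rw [Finset.sum_congr rfl (fun i _ => by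
      rw [show (if i ∈ S then u i else 0) ^ 2 = if i ∈ S then u i ^ 2 else 0 by
        split <;> simp]),
      Finset.sum_ite_mem, Finset.univ_inter]
  -- norm of selected vector equals norm of x
  have hsel : norm2 ((colSel S)ᵀ.mulVec u) = norm2 x := by
    unfold norm2
    congr 1
    have h1 : ∀ j : {i // i ∈ S}, (colSel S)ᵀ.mulVec u j = u j := by
      intro j
      simp [mulVec, dotProduct, colSel, transpose_apply]
    calc ∑ j : {i // i ∈ S}, ((colSel S)ᵀ.mulVec u j) ^ 2
        = ∑ j : {i // i ∈ S}, (u (j : Fin n)) ^ 2 :=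
          Finset.sum_congr rfl (fun j _ => by rw [h1])
      _ = ∑ i ∈ S, u i ^ 2 := Finset.sum_coe_sort S (fun i => u i ^ 2)
      _ = ∑ i, x i ^ 2 := hsumS.symm
  -- u ⬝ᵥ x = norm2 x ^ 2
  have hdot_ux : u ⬝ᵥ x = norm2 x ^ 2 := by
    rw [norm2_sq', hsumS]
    simp only [dotProduct, hxdef, restrictVec]
    rw [Finset.sum_congr rfl (fun i _ => by
      rw [show u i * (if i ∈ S then u i else 0) = if i ∈ S then u i ^ 2 else 0 by
        split <;> ring]),
      Finset.sum_ite_mem, Finset.univ_inter]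
  -- step 1 : norm2 x ≤ δ * norm2 u
  have step1 : norm2 x ≤ δ * norm2 u := by
    apply le_of_sq_le' _ _ (norm2_nonneg' x) (mul_nonneg hδ0 (norm2_nonneg' u))
    have h := hPA w x hx_sparse
    rw [← hu] at h
    calc norm2 x ^ 2 = u ⬝ᵥ x := hdot_ux.symm
      _ ≤ |u ⬝ᵥ x| := le_abs_self _
      _ ≤ δ * norm2 u * norm2 x := h
  -- u ⬝ᵥ u = u ⬝ᵥ v
  have hdot_uu : u ⬝ᵥ u = u ⬝ᵥ v := by
    rw [hu, dot_mulVec' Q w (Q.mulVec w), dot_mulVec' Q w v, ← hw]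
    congr 1
    rw [Matrix.mulVec_mulVec, hQ, Matrix.one_mulVec]
  -- step 2 : norm2 u ≤ δ * norm2 v
  have step2 : norm2 u ≤ δ * norm2 v := by
    apply le_of_sq_le' _ _ (norm2_nonneg' u) (mul_nonneg hδ0 (norm2_nonneg' v))
    have h := hPA w v hv
    rw [← hu] at h
    have huu : norm2 u ^ 2 = u ⬝ᵥ u := by
      rw [norm2_sq']; simp [dotProduct, sq]
    calc norm2 u ^ 2 = u ⬝ᵥ v := by rw [huu, hdot_uu]
      _ ≤ |u ⬝ᵥ v| := le_abs_self _
      _ ≤ δ * norm2 u * norm2 v := h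
      _ = δ * norm2 v * norm2 u := by ring
  calc norm2 ((colSel S)ᵀ.mulVec u) = norm2 x := hsel
    _ ≤ δ * norm2 u := step1
    _ ≤ δ * (δ * norm2 v) := by nlinarith [norm2_nonneg' u, norm2_nonneg' v]
    _ = δ ^ 2 * norm2 v := by ring
end

section
/- Error bound on the recovered regression vector when the outlier support is correctly identified: let X ∈ ℝ^{n×m} have full column rank with X = QR where Q ∈ ℝ^{n×m} has orthonormal columns (QᵀQ = Iₘ) and R ∈ ℝ^{m×m} is invertible, and let τ > 0 satisfy ‖Xθ‖₂ ≥ τ‖θ‖₂ for all θ ∈ ℝᵐ (τ is the smallest singular value of X). Suppose y = Xθ₀ + u₀ + η with supp(u₀) ⊆ S, ‖η‖₂ ≤ ε₀, and let δ ∈ [0,1) satisfy ‖Qw + I_S c‖₂² ≥ (1 − δ)(‖w‖₂² + ‖c‖₂²) for every w ∈ ℝᵐ and c ∈ ℝ^{|S|}. If (w*, c*) minimizes ‖y − Qw − I_S c‖₂ over (w, c), then the estimate θ* = R⁻¹ w* satisfies ‖θ* − θ₀‖₂ ≤ ε₀ / (τ √(1 − δ)). -/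
open Matrix

set_option maxHeartbeats 800000 in
/-- Error bound on the recovered regression vector when the outlier support is correctly
identified: with `X = QR`, `τ` the lower bound on singular values of `X`, outliers
supported in `S`, inlier noise `‖η‖₂ ≤ ε₀`, and the restricted-isometry bound `(1 − δ)`
for `[Q I_S]`, the estimate `θ* = R⁻¹ w*` from the least-squares fit over `[Q I_S]`
satisfies `‖θ* − θ₀‖₂ ≤ ε₀ / (τ √(1 − δ))`. -/
theorem stmt9 {n m : ℕ} (X : Matrix (Fin n) (Fin m) ℝ)
    (Q : Matrix (Fin n) (Fin m) ℝ) (R : Matrix (Fin m) (Fin m) ℝ)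
    (hQ : Qᵀ * Q = 1) (hR : IsUnit R) (hQR : X = Q * R)
    (τ : ℝ) (hτ : 0 < τ) (hX : ∀ θ : Fin m → ℝ, τ * norm2 θ ≤ norm2 (X.mulVec θ))
    (θ₀ : Fin m → ℝ) (u₀ η : Fin n → ℝ) (S : Finset (Fin n))
    (hsupp : ∀ i ∉ S, u₀ i = 0) (ε₀ : ℝ) (hη : norm2 η ≤ ε₀)
    (y : Fin n → ℝ) (hy : y = X.mulVec θ₀ + u₀ + η)
    (δ : ℝ) (hδ0 : 0 ≤ δ) (hδ1 : δ < 1)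
    (hRIP : ∀ (w : Fin m → ℝ) (c : {i // i ∈ S} → ℝ),
      (1 - δ) * (norm2 w ^ 2 + norm2 c ^ 2)
        ≤ norm2 (Q.mulVec w + (colSel S).mulVec c) ^ 2)
    (wstar : Fin m → ℝ) (cstar : {i // i ∈ S} → ℝ)
    (hmin : ∀ (w : Fin m → ℝ) (c : {i // i ∈ S} → ℝ),
      norm2 (y - Q.mulVec wstar - (colSel S).mulVec cstar)
        ≤ norm2 (y - Q.mulVec w - (colSel S).mulVec c))
    (θstar : Fin m → ℝ) (hθ : θstar = (R⁻¹).mulVec wstar) :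
    norm2 (θstar - θ₀) ≤ ε₀ / (τ * Real.sqrt (1 - δ)) := by
  have hnn : ∀ {ι : Type} [Fintype ι] (v : ι → ℝ), (0:ℝ) ≤ ∑ i, v i ^ 2 :=
    fun v => Finset.sum_nonneg (fun i _ => sq_nonneg _)
  have hsq : ∀ {ι : Type} [Fintype ι] (v : ι → ℝ), norm2 v ^ 2 = ∑ i, v i ^ 2 :=
    fun v => Real.sq_sqrt (hnn v)
  have hRdet : IsUnit R.det := (Matrix.isUnit_iff_isUnit_det R).mp hR
  have hRRinv : R * R⁻¹ = 1 := Matrix.mul_nonsing_inv R hRdet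
  set w₀ : Fin m → ℝ := R.mulVec θ₀ with hw₀
  set c₀ : {i // i ∈ S} → ℝ := fun j => u₀ j with hc₀
  have hIc₀ : (colSel S).mulVec c₀ = u₀ := by
    funext i
    by_cases hiS : i ∈ S
    · have h : ((colSel S).mulVec c₀) i
          = ∑ j : {i // i ∈ S}, (if i = (j:Fin n) then (1:ℝ) else 0) * u₀ (j:Fin n) := rfl
      rw [h, Finset.sum_eq_single (⟨i, hiS⟩ : {i // i ∈ S})]
      · simp
      · intro b _ hb
        have hne : i ≠ (b : Fin n) := fun h => hb (Subtype.ext h.symm)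
        simp [hne]
      · simp
    · have h : ((colSel S).mulVec c₀) i
          = ∑ j : {i // i ∈ S}, (if i = (j:Fin n) then (1:ℝ) else 0) * u₀ (j:Fin n) := rfl
      rw [h, hsupp i hiS]
      apply Finset.sum_eq_zero
      intro b _
      have hne : i ≠ (b : Fin n) := fun h => hiS (h ▸ b.2)
      simp [hne]
  have hXθ₀ : X.mulVec θ₀ = Q.mulVec w₀ := by
    rw [hQR, hw₀, Matrix.mulVec_mulVec]
  have hη' : y - Q.mulVec w₀ - (colSel S).mulVec c₀ = η := by
    rw [hy, hXθ₀, hIc₀]; abel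
  set r : Fin n → ℝ := y - Q.mulVec wstar - (colSel S).mulVec cstar with hr
  -- orthogonality of the residual
  have horth : ∀ (w : Fin m → ℝ) (c : {i // i ∈ S} → ℝ),
      (∑ i, r i * (Q.mulVec w + (colSel S).mulVec c) i) = 0 := by
    intro w c
    set z : Fin n → ℝ := Q.mulVec w + (colSel S).mulVec c with hz
    set a : ℝ := ∑ i, z i ^ 2 with ha
    set b : ℝ := ∑ i, r i * z i with hb
    have ha0 : 0 ≤ a := hnn z
    have key : ∀ t : ℝ, 0 ≤ t ^ 2 * a - 2 * t * b := by
      intro t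
      have h1 := hmin (wstar + t • w) (cstar + t • c)
      have h2 : y - Q.mulVec (wstar + t • w) - (colSel S).mulVec (cstar + t • c)
          = fun i => r i - t * z i := by
        funext i
        simp only [hr, hz, Matrix.mulVec_add, Matrix.mulVec_smul, Pi.add_apply, Pi.sub_apply,
          Pi.smul_apply, smul_eq_mul]
        ring
      rw [h2] at h1
      have h3 : norm2 r ^ 2 ≤ norm2 (fun i => r i - t * z i) ^ 2 :=
        pow_le_pow_left₀ (Real.sqrt_nonneg _) h1 2
      have h3' : (∑ i, r i ^ 2) ≤ ∑ i, (r i - t * z i) ^ 2 := by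
        calc (∑ i, r i ^ 2) = norm2 r ^ 2 := (hsq r).symm
          _ ≤ norm2 (fun i => r i - t * z i) ^ 2 := h3
          _ = ∑ i, (r i - t * z i) ^ 2 := hsq _
      have h4 : (∑ i, (r i - t * z i) ^ 2) = (∑ i, r i ^ 2) - 2 * t * b + t ^ 2 * a := by
        rw [hb, ha, Finset.mul_sum, Finset.mul_sum, ← Finset.sum_sub_distrib,
          ← Finset.sum_add_distrib]
        apply Finset.sum_congr rfl
        intro i _
        ring
      rw [h4] at h3'
      linarith
    have h5 := key (b / (a + 1))
    have ha1 : (0:ℝ) < a + 1 := by linarith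
    have hpos : (0:ℝ) < (a + 1) ^ 2 := by positivity
    have h6 : (b / (a + 1)) ^ 2 * a - 2 * (b / (a + 1)) * b
        = (b ^ 2 * a - 2 * b ^ 2 * (a + 1)) / (a + 1) ^ 2 := by
      field_simp
    rw [h6] at h5
    have h8 := mul_nonneg h5 hpos.le
    rw [div_mul_cancel₀ _ (ne_of_gt hpos)] at h8
    have hb2 : b ^ 2 ≤ 0 := by nlinarith
    exact sq_eq_zero_iff.mp (le_antisymm hb2 (sq_nonneg b))
  -- the difference vector
  set d : Fin n → ℝ := Q.mulVec (wstar - w₀) + (colSel S).mulVec (cstar - c₀) with hd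
  have hdr : ∀ i, d i = η i - r i := by
    intro i
    have h : d = η - r := by
      rw [← hη', hr, hd, Matrix.mulVec_sub, Matrix.mulVec_sub]
      funext i
      simp only [Pi.add_apply, Pi.sub_apply]
      ring
    rw [h]; rfl
  have hε0 : 0 ≤ ε₀ := le_trans (Real.sqrt_nonneg _) hη
  have hηsq : (∑ i, η i ^ 2) ≤ ε₀ ^ 2 := by
    calc (∑ i, η i ^ 2) = norm2 η ^ 2 := (hsq η).symm
      _ ≤ ε₀ ^ 2 := pow_le_pow_left₀ (Real.sqrt_nonneg _) hη 2
  -- ‖d‖² ≤ ε₀²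
  have hdd : (∑ i, d i ^ 2) = ∑ i, d i * η i := by
    have h0 : (∑ i, r i * d i) = 0 := horth (wstar - w₀) (cstar - c₀)
    have h1 : (∑ i, d i ^ 2) = ∑ i, (d i * η i - r i * d i) := by
      apply Finset.sum_congr rfl
      intro i _
      rw [hdr i]
      ring
    rw [h1, Finset.sum_sub_distrib, h0, sub_zero]
  have hcs : (∑ i, d i * η i) ^ 2 ≤ (∑ i, d i ^ 2) * (∑ i, η i ^ 2) :=
    Finset.sum_mul_sq_le_sq_mul_sq Finset.univ d η
  have hdle : (∑ i, d i ^ 2) ≤ ε₀ ^ 2 := by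
    rcases eq_or_lt_of_le (hnn d) with h | h
    · rw [← h]; positivity
    · have h2 : (∑ i, d i ^ 2) * (∑ i, d i ^ 2) ≤ (∑ i, d i ^ 2) * (∑ i, η i ^ 2) := by
        calc (∑ i, d i ^ 2) * (∑ i, d i ^ 2) = (∑ i, d i * η i) ^ 2 := by rw [hdd]; ring
          _ ≤ _ := hcs
      exact le_trans (le_of_mul_le_mul_left h2 h) hηsq
  -- RIP bound on ‖wstar − w₀‖
  have hwle : (1 - δ) * (∑ i, (wstar - w₀) i ^ 2) ≤ ε₀ ^ 2 := by
    have hrip := hRIP (wstar - w₀) (cstar - c₀)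
    rw [hsq, hsq, hsq] at hrip
    have hc : 0 ≤ ∑ i, (cstar - c₀) i ^ 2 := hnn _
    nlinarith
  -- X (θstar − θ₀) = Q (wstar − w₀)
  have hXstar : X.mulVec θstar = Q.mulVec wstar := by
    rw [hθ, hQR, Matrix.mulVec_mulVec, Matrix.mul_assoc, hRRinv, Matrix.mul_one]
  have hXd : X.mulVec (θstar - θ₀) = Q.mulVec (wstar - w₀) := by
    rw [Matrix.mulVec_sub, hXstar, hXθ₀, ← Matrix.mulVec_sub]
  -- ‖Q v‖ = ‖v‖
  have hQn : ∀ v : Fin m → ℝ, norm2 (Q.mulVec v) = norm2 v := by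
    intro v
    unfold norm2
    congr 1
    have h : (∑ i, (Q.mulVec v) i ^ 2) = (Q.mulVec v) ⬝ᵥ (Q.mulVec v) := by
      simp [dotProduct, sq]
    rw [h, Matrix.dotProduct_mulVec, ← Matrix.mulVec_transpose,
      Matrix.mulVec_mulVec, hQ, Matrix.one_mulVec]
    simp [dotProduct, sq]
  -- combine
  have h1 : τ * norm2 (θstar - θ₀) ≤ norm2 (wstar - w₀) := by
    have hx := hX (θstar - θ₀)
    rw [hXd, hQn] at hx
    exact hx
  have h2 : Real.sqrt (1 - δ) * norm2 (wstar - w₀) ≤ ε₀ := by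
    have hmuls : Real.sqrt (1 - δ) * norm2 (wstar - w₀)
        = Real.sqrt ((1 - δ) * ∑ i, (wstar - w₀) i ^ 2) := by
      rw [Real.sqrt_mul (by linarith)]
      rfl
    rw [hmuls]
    calc Real.sqrt ((1 - δ) * ∑ i, (wstar - w₀) i ^ 2) ≤ Real.sqrt (ε₀ ^ 2) :=
          Real.sqrt_le_sqrt hwle
      _ = ε₀ := Real.sqrt_sq hε0
  have hs0 : 0 < Real.sqrt (1 - δ) := Real.sqrt_pos.mpr (by linarith)
  rw [le_div_iff₀ (by positivity)]
  calc norm2 (θstar - θ₀) * (τ * Real.sqrt (1 - δ))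
      = Real.sqrt (1 - δ) * (τ * norm2 (θstar - θ₀)) := by ring
    _ ≤ Real.sqrt (1 - δ) * norm2 (wstar - w₀) := mul_le_mul_of_nonneg_left h1 hs0.le
    _ ≤ ε₀ := h2
end

section
/- Correct first selection of GARD in the outlier-only case: let Q ∈ ℝ^{n×m} have orthonormal columns (QᵀQ = Iₘ), let u₀ ∈ ℝⁿ be s-sparse with nonempty support S, and let δ ∈ [0,1] satisfy the principal-angle bound for sparsity level s. If δ² < min{|u₀ᵢ| : i ∈ S} / (2 ‖u₀‖₂), then the initial GARD residual r⁰ = (Iₙ − QQᵀ)(Qw₀ + u₀) = (Iₙ − QQᵀ)u₀ satisfies |r⁰ᵢ| > |r⁰ⱼ| for every i ∈ S and every j ∉ S; hence the index of largest residual magnitude belongs to the outlier support S. -/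
open Matrix

/-- Correct first selection of GARD in the outlier-only case: if
`δ² < min_{i ∈ S} |u₀ᵢ| / (2‖u₀‖₂)`, then the initial residual
`r⁰ = (I − QQᵀ)(Qw₀ + u₀)` satisfies `|r⁰ᵢ| > |r⁰ⱼ|` for every `i ∈ S`, `j ∉ S`. -/
theorem stmt10 {n m s : ℕ} (Q : Matrix (Fin n) (Fin m) ℝ) (hQ : Qᵀ * Q = 1)
    (δ : ℝ) (hδ0 : 0 ≤ δ) (hδ1 : δ ≤ 1) (hPA : PABound Q s δ)
    (u₀ : Fin n → ℝ) (S : Finset (Fin n)) (hsupp : ∀ i, i ∈ S ↔ u₀ i ≠ 0)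
    (hSne : S.Nonempty) (hcard : S.card ≤ s)
    (hbound : δ ^ 2 < S.inf' hSne (fun i => |u₀ i|) / (2 * norm2 u₀))
    (w₀ : Fin m → ℝ) (r₀ : Fin n → ℝ)
    (hr₀ : r₀ = (Q.mulVec w₀ + u₀) - Q.mulVec (Qᵀ.mulVec (Q.mulVec w₀ + u₀))) :
    ∀ i ∈ S, ∀ j ∉ S, |r₀ j| < |r₀ i| := by
  classical
  set z := Qᵀ.mulVec u₀ with hz
  set p := Q.mulVec z with hp
  have hr : r₀ = u₀ - p := by
    rw [hr₀]
    have h1 : Qᵀ.mulVec (Q.mulVec w₀) = w₀ := by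
      rw [Matrix.mulVec_mulVec, hQ, Matrix.one_mulVec]
    rw [Matrix.mulVec_add, h1, Matrix.mulVec_add]
    abel
  have hnn : ∀ v : Fin n → ℝ, 0 ≤ norm2 v := fun v => Real.sqrt_nonneg _
  have hsq : ∀ v : Fin n → ℝ, norm2 v ^ 2 = ∑ i, v i ^ 2 := fun v =>
    Real.sq_sqrt (by positivity)
  have hdot : ∀ v : Fin n → ℝ, v ⬝ᵥ v = norm2 v ^ 2 := by
    intro v
    rw [hsq]
    simp [dotProduct, sq]
  -- key adjoint fact
  have key : ∀ v : Fin n → ℝ, p ⬝ᵥ v = z ⬝ᵥ Qᵀ.mulVec v := by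
    intro v
    rw [dotProduct_comm, hp, Matrix.dotProduct_mulVec,
      ← Matrix.mulVec_transpose, dotProduct_comm]
  have hpu : p ⬝ᵥ u₀ = z ⬝ᵥ z := key u₀
  have hpp : p ⬝ᵥ p = z ⬝ᵥ z := by
    rw [key p, hp, Matrix.mulVec_mulVec, hQ, Matrix.one_mulVec]
  -- u₀ is s-sparse
  have hu₀sparse : Sparse s u₀ := ⟨S, hcard, fun i hi => by
    by_contra h; exact hi ((hsupp i).mpr h)⟩
  -- ‖p‖ ≤ δ ‖u₀‖
  have hnormp : norm2 p ≤ δ * norm2 u₀ := by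
    have h := hPA z u₀ hu₀sparse
    rw [← hp] at h
    have h' : norm2 p ^ 2 ≤ δ * norm2 p * norm2 u₀ := by
      have e1 : p ⬝ᵥ u₀ = norm2 p ^ 2 := by rw [hpu, ← hpp, hdot]
      calc norm2 p ^ 2 = p ⬝ᵥ u₀ := e1.symm
      _ ≤ |p ⬝ᵥ u₀| := le_abs_self _
      _ ≤ _ := h
    rcases eq_or_lt_of_le (hnn p) with h0 | h0
    · rw [← h0]; exact mul_nonneg hδ0 (hnn u₀)
    · nlinarith [h']
  -- s ≥ 1
  have hs1 : 1 ≤ s := le_trans (Finset.card_pos.mpr hSne) hcard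
  -- coordinate bound
  have hcoord : ∀ k : Fin n, |p k| ≤ δ * norm2 p := by
    intro k
    set e : Fin n → ℝ := fun i => if i = k then 1 else 0 with he
    have hes : Sparse s e := ⟨{k}, by simpa using hs1, fun i hi => by
      simp only [he]
      rw [if_neg]
      simpa using hi⟩
    have hne : norm2 e = 1 := by
      simp only [norm2, he]
      rw [show (∑ i, (if i = k then (1:ℝ) else 0) ^ 2) = 1 by
        rw [Finset.sum_eq_single k] <;> simp +contextual]
      exact Real.sqrt_one
    have h := hPA z e hes
    rw [← hp, hne, mul_one] at h
    have hpe : p ⬝ᵥ e = p k := by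
      simp [dotProduct, he]
    rwa [hpe] at h
  have hcoord2 : ∀ k : Fin n, |p k| ≤ δ ^ 2 * norm2 u₀ := by
    intro k
    calc |p k| ≤ δ * norm2 p := hcoord k
    _ ≤ δ * (δ * norm2 u₀) := by
        exact mul_le_mul_of_nonneg_left hnormp hδ0
    _ = δ ^ 2 * norm2 u₀ := by ring
  set M := S.inf' hSne (fun i => |u₀ i|) with hM
  have hMpos : 0 < M := by
    rw [hM, Finset.lt_inf'_iff]
    intro i hi
    exact abs_pos.mpr ((hsupp i).mp hi)
  have hu0pos : 0 < norm2 u₀ := by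
    obtain ⟨i₀, hi₀⟩ := hSne
    have hne0 : u₀ i₀ ≠ 0 := (hsupp i₀).mp hi₀
    have : (0:ℝ) < u₀ i₀ ^ 2 := by positivity
    have hle : u₀ i₀ ^ 2 ≤ ∑ i, u₀ i ^ 2 :=
      Finset.single_le_sum (f := fun i => u₀ i ^ 2) (fun i _ => sq_nonneg _) (Finset.mem_univ i₀)
    exact Real.sqrt_pos.mpr (lt_of_lt_of_le this hle)
  have hhalf : δ ^ 2 * norm2 u₀ < M / 2 := by
    rw [lt_div_iff₀ (mul_pos two_pos hu0pos)] at hbound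
    nlinarith [hbound, hu0pos]
  intro i hi j hj
  have huj : u₀ j = 0 := by
    by_contra h; exact hj ((hsupp j).mpr h)
  have hrj : |r₀ j| = |p j| := by
    rw [hr]; simp [huj]
  have hMi : M ≤ |u₀ i| := Finset.inf'_le _ hi
  have hri : M - δ ^ 2 * norm2 u₀ ≤ |r₀ i| := by
    rw [hr]
    have := abs_sub_abs_le_abs_sub (u₀ i) (p i)
    have h2 := hcoord2 i
    simp only [Pi.sub_apply]
    linarith
  rw [hrj]
  have := hcoord2 j
  linarith
end

section
/- Residual formula at the k-th GARD step (noiseless case): let Q ∈ ℝ^{n×m} have orthonormal columns (QᵀQ = Iₘ), y = Qw₀ + u₀ with supp(u₀) = S, and let S_k ⊆ S be a set of k ≥ 1 indices such that M_k = I_k − I_{S_k}ᵀ Q Qᵀ I_{S_k} is invertible. Then the matrix Φ_k = [Q I_{S_k}] has full column rank, and for the (unique) minimizer z* of ‖y − Φ_k z‖₂ the residual satisfies y − Φ_k z* = v_k − Q Qᵀ v_k, where v_k = F_{S∖S_k}(u₀) + I_{S_k} M_k⁻¹ I_{S_k}ᵀ Q Qᵀ F_{S∖S_k}(u₀). -/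
open Matrix

lemma colSelT_mulVec {n : ℕ} (S : Finset (Fin n)) (x : Fin n → ℝ) :
    (colSel S)ᵀ.mulVec x = fun j => x j.1 := by
  funext j
  simp [Matrix.mulVec, dotProduct, colSel, Matrix.transpose_apply]

lemma colSel_mulVec' {n : ℕ} (S : Finset (Fin n)) (c : {i // i ∈ S} → ℝ) :
    (colSel S).mulVec c = fun i => if h : i ∈ S then c ⟨i, h⟩ else 0 := by
  funext i
  by_cases h : i ∈ S
  · simp only [Matrix.mulVec, dotProduct, colSel, Matrix.of_apply, dif_pos h]
    rw [Fintype.sum_eq_single ⟨i, h⟩]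
    · simp
    · intro j hj
      rw [if_neg, zero_mul]
      intro hij
      exact hj (Subtype.ext hij.symm)
  · simp only [Matrix.mulVec, dotProduct, colSel, Matrix.of_apply, dif_neg h]
    apply Finset.sum_eq_zero
    intro j _
    rw [if_neg, zero_mul]
    rintro rfl
    exact h j.2

lemma colSelT_colSel_mulVec {n : ℕ} (S : Finset (Fin n)) (c : {i // i ∈ S} → ℝ) :
    (colSel S)ᵀ.mulVec ((colSel S).mulVec c) = c := by
  rw [colSel_mulVec', colSelT_mulVec]
  funext j
  simp [j.2]

lemma sum_sq_add (n : ℕ) (r d : Fin n → ℝ) (h : r ⬝ᵥ d = 0) :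
    ∑ i, (r + d) i ^ 2 = ∑ i, r i ^ 2 + ∑ i, d i ^ 2 := by
  have : ∀ i ∈ Finset.univ, (r + d) i ^ 2 = r i ^ 2 + d i ^ 2 + 2 * (r i * d i) := by
    intro i _; simp [Pi.add_apply]; ring
  rw [Finset.sum_congr rfl this, Finset.sum_add_distrib, Finset.sum_add_distrib,
    ← Finset.mul_sum]
  have h' : ∑ i, r i * d i = 0 := h
  rw [h']
  ring

/-- Residual formula at the `k`-th GARD step (noiseless case): for `S_k ⊆ S` nonempty with
`M_k = I_k − I_{S_k}ᵀ Q Qᵀ I_{S_k}` invertible, the matrix `Φ_k = [Q I_{S_k}]` has full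
column rank and the least-squares residual equals `v_k − Q Qᵀ v_k`, where
`v_k = F_{S∖S_k}(u₀) + I_{S_k} M_k⁻¹ I_{S_k}ᵀ Q Qᵀ F_{S∖S_k}(u₀)`. -/
theorem stmt11 {n m : ℕ} (Q : Matrix (Fin n) (Fin m) ℝ) (hQ : Qᵀ * Q = 1)
    (w₀ : Fin m → ℝ) (u₀ : Fin n → ℝ) (S : Finset (Fin n))
    (hsupp : ∀ i, i ∈ S ↔ u₀ i ≠ 0)
    (y : Fin n → ℝ) (hy : y = Q.mulVec w₀ + u₀)
    (Sk : Finset (Fin n)) (hSkS : Sk ⊆ S) (hSkne : Sk.Nonempty)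
    (Mk : Matrix {i // i ∈ Sk} {i // i ∈ Sk} ℝ)
    (hMk : Mk = 1 - (colSel Sk)ᵀ * Q * Qᵀ * colSel Sk) (hMkInv : IsUnit Mk)
    (Φk : Matrix (Fin n) (Fin m ⊕ {i // i ∈ Sk}) ℝ)
    (hΦk : Φk = Matrix.fromCols Q (colSel Sk))
    (vk : Fin n → ℝ)
    (hvk : vk = restrictVec (S \ Sk) u₀ +
      (colSel Sk).mulVec ((Mk⁻¹).mulVec
        ((colSel Sk)ᵀ.mulVec (Q.mulVec (Qᵀ.mulVec (restrictVec (S \ Sk) u₀)))))) :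
    Function.Injective Φk.mulVec ∧
      ∀ zstar : Fin m ⊕ {i // i ∈ Sk} → ℝ,
        (∀ z, norm2 (y - Φk.mulVec zstar) ≤ norm2 (y - Φk.mulVec z)) →
          y - Φk.mulVec zstar = vk - Q.mulVec (Qᵀ.mulVec vk) := by
  subst hy hΦk hvk
  set A := colSel Sk with hA
  set u := restrictVec (S \ Sk) u₀ with hu
  set t := Aᵀ.mulVec (Q.mulVec (Qᵀ.mulVec u)) with ht
  set g := Mk⁻¹.mulVec t with hg
  set v := u + A.mulVec g with hv
  set r := v - Q.mulVec (Qᵀ.mulVec v) with hr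
  -- basic algebraic facts
  have hdet : IsUnit Mk.det := (Matrix.isUnit_iff_isUnit_det Mk).mp hMkInv
  have hMkinvMk : ∀ c, Mk⁻¹.mulVec (Mk.mulVec c) = c := fun c => by
    rw [Matrix.mulVec_mulVec, Matrix.nonsing_inv_mul Mk hdet, Matrix.one_mulVec]
  have hMkMkinv : ∀ c, Mk.mulVec (Mk⁻¹.mulVec c) = c := fun c => by
    rw [Matrix.mulVec_mulVec, Matrix.mul_nonsing_inv Mk hdet, Matrix.one_mulVec]
  have hQTQ : ∀ x, Qᵀ.mulVec (Q.mulVec x) = x := fun x => by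
    rw [Matrix.mulVec_mulVec, hQ, Matrix.one_mulVec]
  have hATA : ∀ c, Aᵀ.mulVec (A.mulVec c) = c := colSelT_colSel_mulVec Sk
  have hAQQA : ∀ c, Aᵀ.mulVec (Q.mulVec (Qᵀ.mulVec (A.mulVec c))) = c - Mk.mulVec c := by
    intro c
    have h1 : Aᵀ * Q * Qᵀ * A = 1 - Mk := by rw [hMk, sub_sub_cancel]
    rw [Matrix.mulVec_mulVec, Matrix.mulVec_mulVec, Matrix.mulVec_mulVec,
      h1, Matrix.sub_mulVec, Matrix.one_mulVec]
  have hATu : Aᵀ.mulVec u = 0 := by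
    rw [hA, colSelT_mulVec]
    funext j
    have : (j : Fin n) ∉ S \ Sk := by simp [Finset.mem_sdiff, j.2]
    simp [hu, restrictVec, this]
  -- kernel of Φk is trivial
  have hker : ∀ z, (Matrix.fromCols Q A).mulVec z = 0 → z = 0 := by
    intro z hz0
    rw [← Sum.elim_comp_inl_inr z, Matrix.fromCols_mulVec_sumElim] at hz0
    set z1 := z ∘ Sum.inl with hz1d
    set z2 := z ∘ Sum.inr with hz2d
    have h1 : z1 + Qᵀ.mulVec (A.mulVec z2) = 0 := by
      have := congrArg Qᵀ.mulVec hz0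
      rwa [Matrix.mulVec_add, hQTQ, Matrix.mulVec_zero] at this
    have h2 : Aᵀ.mulVec (Q.mulVec z1) + z2 = 0 := by
      have := congrArg Aᵀ.mulVec hz0
      rwa [Matrix.mulVec_add, hATA, Matrix.mulVec_zero] at this
    have hz1 : z1 = -(Qᵀ.mulVec (A.mulVec z2)) := eq_neg_of_add_eq_zero_left h1
    have hMz2 : Mk.mulVec z2 = 0 := by
      rw [hz1, Matrix.mulVec_neg, Matrix.mulVec_neg, hAQQA] at h2
      have : Mk.mulVec z2 = (-(z2 - Mk.mulVec z2) + z2) := by abel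
      rw [this, h2]
    have hz2 : z2 = 0 := by
      have := hMkinvMk z2
      rwa [hMz2, Matrix.mulVec_zero, eq_comm] at this
    have hz1' : z1 = 0 := by
      rw [hz1, hz2, Matrix.mulVec_zero, Matrix.mulVec_zero, neg_zero]
    funext i
    cases i with
    | inl a => exact congrFun hz1' a
    | inr b => exact congrFun hz2 b
  have hinj : Function.Injective (Matrix.fromCols Q A).mulVec := by
    intro a b hab
    have h0 : (Matrix.fromCols Q A).mulVec (a - b) = 0 := by
      rw [Matrix.mulVec_sub, hab, sub_self]
    exact sub_eq_zero.mp (hker _ h0)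
  refine ⟨hinj, ?_⟩
  -- residual facts
  have hQr : Qᵀ.mulVec r = 0 := by
    rw [hr, Matrix.mulVec_sub, hQTQ, sub_self]
  have hAr : Aᵀ.mulVec r = 0 := by
    have hAv : Aᵀ.mulVec v = g := by
      rw [hv, Matrix.mulVec_add, hATu, hATA, zero_add]
    have hAQQv : Aᵀ.mulVec (Q.mulVec (Qᵀ.mulVec v)) = g := by
      rw [hv, Matrix.mulVec_add, Matrix.mulVec_add, Matrix.mulVec_add, hAQQA, ← ht,
        hg, hMkMkinv]
      abel
    rw [hr, Matrix.mulVec_sub, hAv, hAQQv, sub_self]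
  have horth : ∀ z, r ⬝ᵥ (Matrix.fromCols Q A).mulVec z = 0 := by
    intro z
    rw [← Sum.elim_comp_inl_inr z, Matrix.fromCols_mulVec_sumElim, dotProduct_add,
      dotProduct_mulVec, dotProduct_mulVec,
      ← Matrix.mulVec_transpose, ← Matrix.mulVec_transpose, hQr, hAr,
      zero_dotProduct, zero_dotProduct, add_zero]
  -- a point achieving residual r
  set z0 : Fin m ⊕ {i // i ∈ Sk} → ℝ :=
    Sum.elim (w₀ + Qᵀ.mulVec v) (fun j => u₀ j.1 - g j) with hz0
  have hu₀ : u₀ = A.mulVec (fun j => u₀ j.1) + u := by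
    funext i
    rw [Pi.add_apply, hA, colSel_mulVec']
    by_cases h : i ∈ Sk
    · have : i ∉ S \ Sk := by simp [Finset.mem_sdiff, h]
      simp [h, hu, restrictVec, this]
    · by_cases hS : i ∈ S
      · have : i ∈ S \ Sk := Finset.mem_sdiff.mpr ⟨hS, h⟩
        simp [h, hu, restrictVec, this]
      · have h0 : u₀ i = 0 := by
          by_contra hne
          exact hS ((hsupp i).mpr hne)
        have : i ∉ S \ Sk := by simp [Finset.mem_sdiff, hS]
        simp [h, hu, restrictVec, this, h0]
  have hres0 : (Q.mulVec w₀ + u₀) - (Matrix.fromCols Q A).mulVec z0 = r := by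
    rw [hz0, Matrix.fromCols_mulVec_sumElim, Matrix.mulVec_add]
    have hAsplit : A.mulVec (fun j => u₀ j.1 - g j) =
        A.mulVec (fun j => u₀ j.1) - A.mulVec g := by
      rw [← Matrix.mulVec_sub]; rfl
    rw [hAsplit, hr, hv]
    nth_rewrite 1 [hu₀]
    abel
  intro zstar hmin
  have hle := hmin z0
  rw [hres0] at hle
  set d := (Matrix.fromCols Q A).mulVec z0 - (Matrix.fromCols Q A).mulVec zstar
    with hd
  have hdecomp : (Q.mulVec w₀ + u₀) - (Matrix.fromCols Q A).mulVec zstar = r + d := by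
    rw [hd, ← hres0]; abel
  have hrd : r ⬝ᵥ d = 0 := by
    rw [hd, ← Matrix.mulVec_sub]
    exact horth _
  have hsum : ∑ i, ((Q.mulVec w₀ + u₀) - (Matrix.fromCols Q A).mulVec zstar) i ^ 2 =
      ∑ i, r i ^ 2 + ∑ i, d i ^ 2 := by
    rw [hdecomp]
    exact sum_sq_add n r d hrd
  have hsq : ∑ i, ((Q.mulVec w₀ + u₀) - (Matrix.fromCols Q A).mulVec zstar) i ^ 2 ≤
      ∑ i, r i ^ 2 := by
    have h0 : (0:ℝ) ≤ ∑ i, r i ^ 2 := Finset.sum_nonneg fun i _ => sq_nonneg _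
    exact (Real.sqrt_le_sqrt_iff h0).mp hle
  have hd0 : ∑ i, d i ^ 2 ≤ 0 := by
    rw [hsum] at hsq; linarith
  have hdz : d = 0 := by
    funext i
    have h0 : ∑ i, d i ^ 2 = 0 :=
      le_antisymm hd0 (Finset.sum_nonneg fun i _ => sq_nonneg _)
    have := (Finset.sum_eq_zero_iff_of_nonneg (fun i _ => sq_nonneg (d i))).mp h0 i
      (Finset.mem_univ i)
    exact pow_eq_zero_iff (by norm_num) |>.mp this
  rw [hdecomp, hdz, add_zero]
end

section
/- Norm contraction of the modified outlier vector: let Q ∈ ℝ^{n×m} have orthonormal columns (QᵀQ = Iₘ), let u₀ ∈ ℝⁿ be s-sparse with support S, and let δ ∈ [0,1] satisfy the principal-angle bound for sparsity level s with δ² < min{|u₀ᵢ| : i ∈ S} / (2 ‖u₀‖₂). Then for every nonempty S_k ⊊ S, the matrix M_k = I_k − I_{S_k}ᵀQQᵀI_{S_k} is invertible and the vector v_k = F_{S∖S_k}(u₀) + I_{S_k} M_k⁻¹ I_{S_k}ᵀ Q Qᵀ F_{S∖S_k}(u₀) satisfies ‖v_k‖₂ < ‖u₀‖₂. -/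
open Matrix

namespace Stmt12Aux

lemma norm2_nonneg {ι : Type*} [Fintype ι] (v : ι → ℝ) : 0 ≤ norm2 v :=
  Real.sqrt_nonneg _

lemma norm2_sq {ι : Type*} [Fintype ι] (v : ι → ℝ) : norm2 v ^ 2 = ∑ i, v i ^ 2 :=
  Real.sq_sqrt (Finset.sum_nonneg fun _ _ => sq_nonneg _)

lemma norm2_mono {ι : Type*} [Fintype ι] {v w : ι → ℝ} (h : ∑ i, v i ^ 2 ≤ ∑ i, w i ^ 2) :
    norm2 v ≤ norm2 w := Real.sqrt_le_sqrt h

lemma dot_le_norm2 {ι : Type*} [Fintype ι] (v w : ι → ℝ) :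
    v ⬝ᵥ w ≤ norm2 v * norm2 w := by
  simpa [dotProduct, norm2] using
    Real.sum_mul_le_sqrt_mul_sqrt Finset.univ v w

/-- selector transpose acts as restriction to the subtype -/
lemma colSelT_mulVec {n : ℕ} (Sk : Finset (Fin n)) (x : Fin n → ℝ) (j : {i // i ∈ Sk}) :
    (colSel Sk)ᵀ.mulVec x j = x j := by
  simp only [Matrix.mulVec, dotProduct, Matrix.transpose_apply, colSel, Matrix.of_apply]
  rw [Fintype.sum_eq_single (j : Fin n)]
  · simp
  · intro i hi; rw [if_neg hi, zero_mul]

lemma colSel_mulVec {n : ℕ} (Sk : Finset (Fin n)) (d : {i // i ∈ Sk} → ℝ) (i : Fin n) :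
    (colSel Sk).mulVec d i = if h : i ∈ Sk then d ⟨i, h⟩ else 0 := by
  simp only [Matrix.mulVec, dotProduct, colSel, Matrix.of_apply]
  split_ifs with h
  · rw [Fintype.sum_eq_single (⟨i, h⟩ : {i // i ∈ Sk})]
    · simp
    · intro j hj
      have : i ≠ (j : Fin n) := by
        intro he; apply hj; ext; simp [he]
      simp [this]
  · apply Finset.sum_eq_zero; intro j _
    have : i ≠ (j : Fin n) := fun he => h (he ▸ j.2)
    simp [this]

/-- adjointness: `d ⬝ (I_Skᵀ x) = (I_Sk d) ⬝ x`. -/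
lemma colSel_adj {n : ℕ} (Sk : Finset (Fin n)) (d : {i // i ∈ Sk} → ℝ) (x : Fin n → ℝ) :
    d ⬝ᵥ (colSel Sk)ᵀ.mulVec x = (colSel Sk).mulVec d ⬝ᵥ x := by
  rw [Matrix.dotProduct_mulVec, Matrix.vecMul_transpose]

lemma Q_adj {n m : ℕ} (Q : Matrix (Fin n) (Fin m) ℝ) (w : Fin m → ℝ) (x : Fin n → ℝ) :
    Q.mulVec w ⬝ᵥ x = w ⬝ᵥ Qᵀ.mulVec x := by
  rw [dotProduct_comm, Matrix.dotProduct_mulVec, Matrix.mulVec_transpose,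
    dotProduct_comm]

lemma norm2_Q_mulVec {n m : ℕ} {Q : Matrix (Fin n) (Fin m) ℝ} (hQ : Qᵀ * Q = 1)
    (w : Fin m → ℝ) : norm2 (Q.mulVec w) = norm2 w := by
  unfold norm2
  congr 1
  have h1 : ∑ i, Q.mulVec w i ^ 2 = Q.mulVec w ⬝ᵥ Q.mulVec w := by
    simp [dotProduct, sq]
  have h2 : ∑ i, w i ^ 2 = w ⬝ᵥ w := by simp [dotProduct, sq]
  rw [h1, h2, Q_adj, Matrix.mulVec_mulVec, hQ, Matrix.one_mulVec]

/-- key PA consequence: `‖Qᵀ x‖ ≤ δ ‖x‖` for sparse `x`. -/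
lemma QT_contract {n m s : ℕ} {Q : Matrix (Fin n) (Fin m) ℝ} (hQ : Qᵀ * Q = 1)
    {δ : ℝ} (hδ0 : 0 ≤ δ) (hPA : PABound Q s δ) {x : Fin n → ℝ} (hx : Sparse s x) :
    norm2 (Qᵀ.mulVec x) ≤ δ * norm2 x := by
  set w := Qᵀ.mulVec x with hw
  have h := hPA w x hx
  rw [norm2_Q_mulVec hQ] at h
  have hdot : Q.mulVec w ⬝ᵥ x = norm2 w ^ 2 := by
    rw [Q_adj, ← hw, norm2_sq]; simp [dotProduct, sq]
  rw [hdot, abs_of_nonneg (sq_nonneg _)] at h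
  rcases eq_or_lt_of_le (norm2_nonneg w) with h0 | h0
  · rw [← h0]; exact mul_nonneg hδ0 (norm2_nonneg x)
  · nlinarith [h, h0]

end Stmt12Aux

namespace Stmt12Aux

lemma colSel_entry {n : ℕ} (Sk : Finset (Fin n)) (d : {i // i ∈ Sk} → ℝ)
    (j : {i // i ∈ Sk}) : (colSel Sk).mulVec d (j : Fin n) = d j := by
  rw [colSel_mulVec, dif_pos j.2]

lemma norm2_colSel {n : ℕ} (Sk : Finset (Fin n)) (d : {i // i ∈ Sk} → ℝ) :
    norm2 ((colSel Sk).mulVec d) = norm2 d := by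
  unfold norm2
  congr 1
  rw [← Finset.sum_subset (Finset.subset_univ Sk)
    (fun i _ hi => by rw [colSel_mulVec, dif_neg hi, zero_pow two_ne_zero])]
  rw [← Finset.sum_coe_sort Sk (fun i => (colSel Sk).mulVec d i ^ 2)]
  exact Finset.sum_congr rfl fun j _ => by rw [colSel_entry]

end Stmt12Aux

open Stmt12Aux

/-- Norm contraction of the modified outlier vector: under the GARD recovery condition
`δ² < min_{i ∈ S} |u₀ᵢ| / (2‖u₀‖₂)`, for every nonempty `S_k ⊊ S` the matrix
`M_k = I_k − I_{S_k}ᵀ Q Qᵀ I_{S_k}` is invertible and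
`v_k = F_{S∖S_k}(u₀) + I_{S_k} M_k⁻¹ I_{S_k}ᵀ Q Qᵀ F_{S∖S_k}(u₀)` satisfies
`‖v_k‖₂ < ‖u₀‖₂`. -/
theorem stmt12 {n m s : ℕ} (Q : Matrix (Fin n) (Fin m) ℝ) (hQ : Qᵀ * Q = 1)
    (δ : ℝ) (hδ0 : 0 ≤ δ) (hδ1 : δ ≤ 1) (hPA : PABound Q s δ)
    (u₀ : Fin n → ℝ) (S : Finset (Fin n)) (hsupp : ∀ i, i ∈ S ↔ u₀ i ≠ 0)
    (hSne : S.Nonempty) (hcard : S.card ≤ s)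
    (hbound : δ ^ 2 < S.inf' hSne (fun i => |u₀ i|) / (2 * norm2 u₀))
    (Sk : Finset (Fin n)) (hSkne : Sk.Nonempty) (hSkS : Sk ⊂ S)
    (Mk : Matrix {i // i ∈ Sk} {i // i ∈ Sk} ℝ)
    (hMk : Mk = 1 - (colSel Sk)ᵀ * Q * Qᵀ * colSel Sk)
    (vk : Fin n → ℝ)
    (hvk : vk = restrictVec (S \ Sk) u₀ +
      (colSel Sk).mulVec ((Mk⁻¹).mulVec
        ((colSel Sk)ᵀ.mulVec (Q.mulVec (Qᵀ.mulVec (restrictVec (S \ Sk) u₀)))))) :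
    IsUnit Mk ∧ norm2 vk < norm2 u₀ := by
  classical
  set a : Fin n → ℝ := restrictVec (S \ Sk) u₀ with ha
  set m0 : ℝ := S.inf' hSne (fun i => |u₀ i|) with hm0
  clear_value a m0
  have hSkS' : Sk ⊆ S := hSkS.subset
  have hm0pos : 0 < m0 := by
    rw [hm0, Finset.lt_inf'_iff]
    intro i hi
    exact abs_pos.mpr ((hsupp i).mp hi)
  obtain ⟨i0, hi0⟩ := hSne
  have hU : 0 < norm2 u₀ := by
    apply Real.sqrt_pos.mpr
    apply Finset.sum_pos' (fun _ _ => sq_nonneg _)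
    have h0 : u₀ i0 ≠ 0 := (hsupp i0).mp hi0
    exact ⟨i0, Finset.mem_univ _, by positivity⟩
  have habs_le : ∀ i : Fin n, |u₀ i| ≤ norm2 u₀ := by
    intro i
    rw [norm2, ← Real.sqrt_sq_eq_abs]
    exact Real.sqrt_le_sqrt (Finset.single_le_sum (f := fun j => u₀ j ^ 2)
      (fun _ _ => sq_nonneg _) (Finset.mem_univ i))
  have hm0le : m0 ≤ norm2 u₀ := by
    rw [hm0]
    exact le_trans (Finset.inf'_le _ hi0) (habs_le i0)
  have hb' : δ ^ 2 * (2 * norm2 u₀) < m0 := (lt_div_iff₀ (by positivity)).mp hbound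
  have hhalf : δ ^ 2 < 1 / 2 := by nlinarith
  have hδ2U : δ ^ 2 * norm2 u₀ < m0 / 2 := by nlinarith
  -- sparsity facts
  have hSpA : Sparse s a := by
    refine ⟨S, hcard, fun i hi => ?_⟩
    rw [ha]
    exact if_neg (fun hmem => hi (Finset.mem_sdiff.mp hmem).1)
  have hSpSel : ∀ d : {i // i ∈ Sk} → ℝ, Sparse s ((colSel Sk).mulVec d) := by
    intro d
    exact ⟨S, hcard, fun i hi => by
      rw [colSel_mulVec]; exact dif_neg (fun h => hi (hSkS' h))⟩
  -- coercivity
  have hco : ∀ e : {i // i ∈ Sk} → ℝ, (1 - δ ^ 2) * norm2 e ^ 2 ≤ e ⬝ᵥ Mk.mulVec e := by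
    intro e
    set y : Fin n → ℝ := (colSel Sk).mulVec e with hy
    have hMe : Mk.mulVec e = e - (colSel Sk)ᵀ.mulVec (Q.mulVec (Qᵀ.mulVec y)) := by
      rw [hMk, Matrix.sub_mulVec, Matrix.one_mulVec]
      rw [Matrix.mulVec_mulVec, Matrix.mulVec_mulVec, Matrix.mulVec_mulVec]
    have hdot : e ⬝ᵥ Mk.mulVec e = norm2 e ^ 2 - norm2 (Qᵀ.mulVec y) ^ 2 := by
      rw [hMe, dotProduct_sub, colSel_adj, ← hy]
      rw [dotProduct_comm y, Q_adj]
      rw [norm2_sq, norm2_sq]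
      congr 1
      · simp [dotProduct, sq]
      · simp [dotProduct, sq]
    have hQy : norm2 (Qᵀ.mulVec y) ≤ δ * norm2 y := QT_contract hQ hδ0 hPA (hSpSel e)
    have hye : norm2 y = norm2 e := norm2_colSel Sk e
    rw [hdot]
    have h1 : norm2 (Qᵀ.mulVec y) ^ 2 ≤ (δ * norm2 e) ^ 2 := by
      apply pow_le_pow_left₀ (norm2_nonneg _)
      rw [← hye]; exact hQy
    nlinarith [norm2_nonneg e, sq_nonneg (norm2 e)]
  -- invertibility
  have hdet : Mk.det ≠ 0 := by
    intro h0
    obtain ⟨e, he0, hMe⟩ := Matrix.exists_mulVec_eq_zero_iff.mpr h0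
    have h1 := hco e
    rw [hMe, dotProduct_zero] at h1
    have hepos : 0 < norm2 e ^ 2 := by
      rw [norm2_sq]
      apply Finset.sum_pos' (fun _ _ => sq_nonneg _)
      obtain ⟨j, hj⟩ := Function.ne_iff.mp he0
      have hj' : e j ≠ 0 := by simpa using hj
      exact ⟨j, Finset.mem_univ _, by positivity⟩
    nlinarith
  have hUnit : IsUnit Mk := (Matrix.isUnit_iff_isUnit_det Mk).mpr (isUnit_iff_ne_zero.mpr hdet)
  refine ⟨hUnit, ?_⟩
  -- the correction term
  set c : {i // i ∈ Sk} → ℝ := (colSel Sk)ᵀ.mulVec (Q.mulVec (Qᵀ.mulVec a)) with hc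
  set d : {i // i ∈ Sk} → ℝ := (Mk⁻¹).mulVec c with hd
  set b : Fin n → ℝ := (colSel Sk).mulVec d with hb
  clear_value b
  have hMd : Mk.mulVec d = c := by
    rw [hd, Matrix.mulVec_mulVec, Matrix.mul_nonsing_inv _ (isUnit_iff_ne_zero.mpr hdet), Matrix.one_mulVec]
  clear_value c d
  -- bound on ‖c‖
  have hQa : norm2 (Qᵀ.mulVec a) ≤ δ * norm2 a := QT_contract hQ hδ0 hPA hSpA
  have haU : norm2 a ≤ norm2 u₀ := by
    apply norm2_mono
    apply Finset.sum_le_sum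
    intro i _
    rw [ha, restrictVec]
    split_ifs
    · exact le_rfl
    · simpa using sq_nonneg (u₀ i)
  have hc2 : norm2 c ^ 2 ≤ δ * norm2 (Qᵀ.mulVec a) * norm2 c := by
    have h1 : norm2 c ^ 2 = Q.mulVec (Qᵀ.mulVec a) ⬝ᵥ (colSel Sk).mulVec c := by
      rw [norm2_sq]
      have : (∑ j, c j ^ 2) = c ⬝ᵥ c := by simp [dotProduct, sq]
      rw [this]
      nth_rewrite 2 [hc]
      rw [colSel_adj, dotProduct_comm]
    rw [h1]
    calc Q.mulVec (Qᵀ.mulVec a) ⬝ᵥ (colSel Sk).mulVec c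
        ≤ |Q.mulVec (Qᵀ.mulVec a) ⬝ᵥ (colSel Sk).mulVec c| := le_abs_self _
      _ ≤ δ * norm2 (Q.mulVec (Qᵀ.mulVec a)) * norm2 ((colSel Sk).mulVec c) :=
          hPA _ _ (hSpSel c)
      _ = δ * norm2 (Qᵀ.mulVec a) * norm2 c := by
          rw [norm2_Q_mulVec hQ, norm2_colSel]
  have hcbound : norm2 c ≤ δ * norm2 (Qᵀ.mulVec a) := by
    rcases eq_or_lt_of_le (norm2_nonneg c) with h0 | h0
    · rw [← h0]
      exact mul_nonneg hδ0 (norm2_nonneg _)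
    · nlinarith
  have hcU : norm2 c ≤ δ ^ 2 * norm2 u₀ := by
    calc norm2 c ≤ δ * norm2 (Qᵀ.mulVec a) := hcbound
      _ ≤ δ * (δ * norm2 a) := by
          exact mul_le_mul_of_nonneg_left hQa hδ0
      _ ≤ δ ^ 2 * norm2 u₀ := by nlinarith [norm2_nonneg a]
  -- bound on ‖d‖
  have hDc : (1 - δ ^ 2) * norm2 d ^ 2 ≤ norm2 d * norm2 c := by
    calc (1 - δ ^ 2) * norm2 d ^ 2 ≤ d ⬝ᵥ Mk.mulVec d := hco d
      _ = d ⬝ᵥ c := by rw [hMd]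
      _ ≤ norm2 d * norm2 c := dot_le_norm2 d c
  have hD : norm2 d < m0 := by
    rcases eq_or_lt_of_le (norm2_nonneg d) with h0 | h0
    · rw [← h0]; exact hm0pos
    · have h1 : (1 - δ ^ 2) * norm2 d ≤ norm2 c := by
        refine le_of_mul_le_mul_right ?_ h0
        calc (1 - δ ^ 2) * norm2 d * norm2 d = (1 - δ ^ 2) * norm2 d ^ 2 := by ring
          _ ≤ norm2 d * norm2 c := hDc
          _ = norm2 c * norm2 d := by ring
      have h2 : (1 / 2 : ℝ) * norm2 d ≤ (1 - δ ^ 2) * norm2 d :=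
        mul_le_mul_of_nonneg_right (by linarith) h0.le
      linarith
  -- final sum computations
  have hvk' : vk = a + b := hvk
  have hpt : ∀ i, (a i + b i) ^ 2 = a i ^ 2 + b i ^ 2 := by
    intro i
    by_cases hi : i ∈ Sk
    · have hai : a i = 0 := by
        rw [ha, restrictVec]
        exact if_neg (fun hmem => (Finset.mem_sdiff.mp hmem).2 hi)
      rw [hai]; ring
    · have hbi : b i = 0 := by rw [hb, colSel_mulVec]; exact dif_neg hi
      rw [hbi]; ring
  have hsum_split : ∑ i, vk i ^ 2 = (∑ i, a i ^ 2) + ∑ i, b i ^ 2 := by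
    rw [hvk']
    simp_rw [Pi.add_apply, hpt]
    exact Finset.sum_add_distrib
  have hsum_b : ∑ i, b i ^ 2 = norm2 d ^ 2 := by
    rw [← norm2_sq, hb, norm2_colSel]
  have hsum_a : ∑ i, a i ^ 2 = ∑ i ∈ S \ Sk, u₀ i ^ 2 := by
    rw [← Finset.sum_subset (Finset.subset_univ (S \ Sk))
      (fun i _ hi => by rw [ha, restrictVec, if_neg hi, zero_pow two_ne_zero])]
    apply Finset.sum_congr rfl
    intro i hi
    rw [ha, restrictVec, if_pos hi]
  have hsum_u : ∑ i, u₀ i ^ 2 = (∑ i ∈ S \ Sk, u₀ i ^ 2) + ∑ i ∈ Sk, u₀ i ^ 2 := by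
    rw [Finset.sum_sdiff hSkS']
    exact (Finset.sum_subset (Finset.subset_univ S)
      (fun i _ hi => by rw [of_not_not (fun h => hi ((hsupp i).mpr h))]; ring)).symm
  have hm0Sk : m0 ^ 2 ≤ ∑ i ∈ Sk, u₀ i ^ 2 := by
    obtain ⟨j, hj⟩ := hSkne
    have h1 : m0 ≤ |u₀ j| := by rw [hm0]; exact Finset.inf'_le _ (hSkS' hj)
    have h2 : m0 ^ 2 ≤ u₀ j ^ 2 := by
      rw [← sq_abs (u₀ j)]
      exact pow_le_pow_left₀ hm0pos.le h1 2
    exact le_trans h2 (Finset.single_le_sum (f := fun i => u₀ i ^ 2)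
      (fun _ _ => sq_nonneg _) hj)
  have hD2 : norm2 d ^ 2 < m0 ^ 2 := pow_lt_pow_left₀ hD (norm2_nonneg d) two_ne_zero
  have hfinal : ∑ i, vk i ^ 2 < ∑ i, u₀ i ^ 2 := by
    rw [hsum_split, hsum_b, hsum_a, hsum_u]
    have := hm0Sk
    linarith
  exact Real.sqrt_lt_sqrt (Finset.sum_nonneg fun _ _ => sq_nonneg _) hfinal
end

section
/- Correct selection at every GARD step in the outlier-only case: let Q ∈ ℝ^{n×m} have orthonormal columns (QᵀQ = Iₘ), let u₀ ∈ ℝⁿ be s-sparse with support S, and let δ ∈ [0,1] satisfy the principal-angle bound for sparsity level s with δ² < min{|u₀ᵢ| : i ∈ S} / (2 ‖u₀‖₂). Then for every nonempty S_k ⊊ S, the matrix M_k = I_k − I_{S_k}ᵀQQᵀI_{S_k} is invertible and the residual r = v_k − QQᵀ v_k, where v_k = F_{S∖S_k}(u₀) + I_{S_k} M_k⁻¹ I_{S_k}ᵀ Q Qᵀ F_{S∖S_k}(u₀), satisfies |rᵢ| > |rⱼ| for every i ∈ S∖S_k and every j ∈ Sᶜ; hence the next selected index again belongs to the true outlier support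 S. -/
open Matrix

namespace GardAux


variable {ι : Type*} [Fintype ι]

lemma norm2_nonneg (v : ι → ℝ) : 0 ≤ norm2 v := Real.sqrt_nonneg _

lemma sum_sq_nonneg (v : ι → ℝ) : 0 ≤ ∑ i, v i ^ 2 :=
  Finset.sum_nonneg fun i _ => sq_nonneg _

lemma norm2_sq (v : ι → ℝ) : norm2 v ^ 2 = ∑ i, v i ^ 2 :=
  Real.sq_sqrt (sum_sq_nonneg v)

lemma norm2_le_norm2 {κ : Type*} [Fintype κ] {v : ι → ℝ} {w : κ → ℝ}
    (h : ∑ i, v i ^ 2 ≤ ∑ j, w j ^ 2) : norm2 v ≤ norm2 w := Real.sqrt_le_sqrt h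

lemma abs_le_norm2 (v : ι → ℝ) (i : ι) : |v i| ≤ norm2 v := by
  rw [← Real.sqrt_sq_eq_abs]
  exact Real.sqrt_le_sqrt (Finset.single_le_sum (f := fun i => v i ^ 2)
    (fun i _ => sq_nonneg _) (Finset.mem_univ i))

lemma norm2_pos {v : ι → ℝ} {i : ι} (h : v i ≠ 0) : 0 < norm2 v :=
  lt_of_lt_of_le (abs_pos.2 h) (abs_le_norm2 v i)

lemma le_of_sq_le_sq {a b : ℝ} (ha : 0 ≤ a) (hb : 0 ≤ b) (h : a ^ 2 ≤ b ^ 2) : a ≤ b := by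
  nlinarith

lemma cancel_sq {t K : ℝ} (ht : 0 ≤ t) (hK : 0 ≤ K) (h : t ^ 2 ≤ K * t) : t ≤ K := by
  rcases ht.eq_or_lt with h0 | h0
  · rw [← h0]; exact hK
  · nlinarith

lemma dot_le_norm2 (v w : ι → ℝ) : v ⬝ᵥ w ≤ norm2 v * norm2 w := by
  have h := Finset.sum_mul_sq_le_sq_mul_sq Finset.univ v w
  have h2 : (v ⬝ᵥ w) ^ 2 ≤ (norm2 v * norm2 w) ^ 2 := by
    rw [mul_pow, norm2_sq, norm2_sq]
    simpa [dotProduct] using h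
  have hnn : 0 ≤ norm2 v * norm2 w := mul_nonneg (norm2_nonneg v) (norm2_nonneg w)
  nlinarith [h2, hnn]

lemma norm2_add_le (u v : ι → ℝ) : norm2 (u + v) ≤ norm2 u + norm2 v := by
  apply le_of_sq_le_sq (norm2_nonneg _) (add_nonneg (norm2_nonneg u) (norm2_nonneg v))
  have hd := dot_le_norm2 u v
  have hsum : ∑ i, (u + v) i ^ 2 = (∑ i, u i ^ 2) + 2 * (u ⬝ᵥ v) + ∑ i, v i ^ 2 := by
    simp only [Pi.add_apply, add_sq, dotProduct, Finset.sum_add_distrib,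
      Finset.mul_sum]
    ring_nf
  rw [norm2_sq, hsum, add_sq]
  rw [norm2_sq, norm2_sq] at *
  nlinarith [norm2_nonneg u, norm2_nonneg v, GardAux.norm2_sq u, GardAux.norm2_sq v]



lemma colSelT_mulVec {n : ℕ} (Sk : Finset (Fin n)) (a : Fin n → ℝ) (j : {i // i ∈ Sk}) :
    ((colSel Sk)ᵀ).mulVec a j = a j := by
  simp [Matrix.mulVec, dotProduct, colSel, Matrix.transpose_apply, ite_mul,
    Finset.sum_ite_eq']
lemma colSel_mulVec {n : ℕ} (Sk : Finset (Fin n)) (c : {i // i ∈ Sk} → ℝ) (i : Fin n) :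
    (colSel Sk).mulVec c i = if h : i ∈ Sk then c ⟨i, h⟩ else 0 := by
  unfold colSel Matrix.mulVec dotProduct
  split_ifs with h
  · rw [Finset.sum_eq_single (⟨i, h⟩ : {x // x ∈ Sk})]
    · simp
    · intro b _ hb
      simp only [Matrix.of_apply, ite_mul, one_mul, zero_mul]
      rw [if_neg]
      intro he
      exact hb (by ext; simp [← he])
    · simp
  · apply Finset.sum_eq_zero
    intro b _
    simp only [Matrix.of_apply, ite_mul, one_mul, zero_mul]
    rw [if_neg]
    rintro rfl
    exact h b.2
lemma sum_dite_mem {n : ℕ} (Sk : Finset (Fin n)) (g : {i // i ∈ Sk} → ℝ) :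
    ∑ i : Fin n, (if h : i ∈ Sk then g ⟨i, h⟩ else 0) = ∑ j : {i // i ∈ Sk}, g j := by
  have h1 : ∑ i : Fin n, (if h : i ∈ Sk then g ⟨i, h⟩ else 0)
      = ∑ i ∈ Sk, (if h : i ∈ Sk then g ⟨i, h⟩ else 0) := by
    refine (Finset.sum_subset (Finset.subset_univ Sk) ?_).symm
    intro x _ hx; simp [hx]
  rw [h1, ← Finset.sum_attach Sk (fun i => if h : i ∈ Sk then g ⟨i, h⟩ else 0),
    Finset.univ_eq_attach]
  apply Finset.sum_congr rfl
  intro x _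
  simp

-- ‖Q x‖ = ‖x‖
lemma mulVec_norm2 {n m : ℕ} {Q : Matrix (Fin n) (Fin m) ℝ} (hQ : Qᵀ * Q = 1)
    (x : Fin m → ℝ) : norm2 (Q.mulVec x) = norm2 x := by
  unfold norm2
  congr 1
  have h1 : ∑ i, (Q.mulVec x) i ^ 2 = (Q.mulVec x) ⬝ᵥ (Q.mulVec x) := by
    simp [dotProduct, sq]
  have h2 : (Q.mulVec x) ⬝ᵥ (Q.mulVec x) = x ⬝ᵥ x := by
    rw [Matrix.dotProduct_mulVec, ← Matrix.mulVec_transpose Q (Q *ᵥ x),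
      Matrix.mulVec_mulVec, hQ, Matrix.one_mulVec]
  rw [h1, h2]
  simp [dotProduct, sq]


section PA
variable {n m s : ℕ} {Q : Matrix (Fin n) (Fin m) ℝ} {δ : ℝ}

lemma mulVec_dot (Q : Matrix (Fin n) (Fin m) ℝ) (y : Fin m → ℝ) (v : Fin n → ℝ) :
    (Q.mulVec y) ⬝ᵥ v = (Qᵀ.mulVec v) ⬝ᵥ y := by
  rw [dotProduct_comm, Matrix.dotProduct_mulVec, ← Matrix.mulVec_transpose]

lemma self_dot {ι : Type*} [Fintype ι] (v : ι → ℝ) : v ⬝ᵥ v = norm2 v ^ 2 := by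
  rw [norm2_sq]; simp [dotProduct, sq]

lemma qtrans_bound (hQ : Qᵀ * Q = 1) (hδ0 : 0 ≤ δ) (hPA : PABound Q s δ)
    {v : Fin n → ℝ} (hv : Sparse s v) :
    norm2 (Qᵀ.mulVec v) ≤ δ * norm2 v := by
  have key : norm2 (Qᵀ.mulVec v) ^ 2 = (Q.mulVec (Qᵀ.mulVec v)) ⬝ᵥ v := by
    rw [mulVec_dot, self_dot]
  have h := hPA (Qᵀ.mulVec v) v hv
  rw [mulVec_norm2 hQ] at h
  have h2 : norm2 (Qᵀ.mulVec v) ^ 2 ≤ (δ * norm2 v) * norm2 (Qᵀ.mulVec v) := by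
    rw [key]
    calc (Q.mulVec (Qᵀ.mulVec v)) ⬝ᵥ v ≤ |(Q.mulVec (Qᵀ.mulVec v)) ⬝ᵥ v| := le_abs_self _
    _ ≤ δ * norm2 (Qᵀ.mulVec v) * norm2 v := h
    _ = (δ * norm2 v) * norm2 (Qᵀ.mulVec v) := by ring
  exact cancel_sq (norm2_nonneg _) (mul_nonneg hδ0 (norm2_nonneg _)) h2

lemma single_norm2 {nn : ℕ} (a : Fin nn) : norm2 (Pi.single a (1:ℝ)) = 1 := by
  have h : ∑ i : Fin nn, (Pi.single a (1:ℝ) : Fin nn → ℝ) i ^ 2 = 1 := by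
    rw [Finset.sum_eq_single a] <;> simp +contextual [Pi.single_apply]
  unfold norm2
  rw [h, Real.sqrt_one]

lemma component_bound (hQ : Qᵀ * Q = 1) (hPA : PABound Q s δ) (hs : 1 ≤ s)
    (y : Fin m → ℝ) (a : Fin n) : |(Q.mulVec y) a| ≤ δ * norm2 y := by
  have hsp : Sparse s (Pi.single a (1:ℝ)) := by
    refine ⟨{a}, by simpa using hs, fun i hi => ?_⟩
    simp only [Finset.mem_singleton] at hi
    simp [Pi.single_apply, hi]
  have h := hPA y (Pi.single a 1) hsp
  rw [mulVec_norm2 hQ, single_norm2, mul_one] at h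
  have hdot : (Q.mulVec y) ⬝ᵥ Pi.single a 1 = (Q.mulVec y) a := by
    simp [dotProduct, Pi.single_apply, mul_ite, Finset.sum_ite_eq']
  rwa [hdot] at h

lemma norm2_colSel {nn : ℕ} (Sk : Finset (Fin nn)) (c : {i // i ∈ Sk} → ℝ) :
    norm2 ((colSel Sk).mulVec c) = norm2 c := by
  unfold norm2
  congr 1
  rw [← sum_dite_mem Sk (fun j => c j ^ 2)]
  apply Finset.sum_congr rfl
  intro i _
  rw [colSel_mulVec]
  split_ifs <;> simp

lemma norm2_colSelT_le {nn : ℕ} (Sk : Finset (Fin nn)) (a : Fin nn → ℝ) :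
    norm2 (((colSel Sk)ᵀ).mulVec a) ≤ norm2 a := by
  apply norm2_le_norm2
  rw [show ∑ j, ((colSel Sk)ᵀ.mulVec a) j ^ 2 = ∑ i : Fin nn, (if _ : i ∈ Sk then a i ^ 2 else 0) from ?_]
  · apply Finset.sum_le_sum
    intro i _
    split_ifs <;> simp [sq_nonneg]
  · rw [sum_dite_mem Sk (fun j => a ↑j ^ 2)]
    apply Finset.sum_congr rfl
    intro j _
    rw [colSelT_mulVec]

lemma sel_bound (hQ : Qᵀ * Q = 1) (hδ0 : 0 ≤ δ) (hPA : PABound Q s δ)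
    {S Sk : Finset (Fin n)} (hsub : Sk ⊆ S) (hcard : S.card ≤ s) (y : Fin m → ℝ) :
    norm2 (((colSel Sk)ᵀ).mulVec (Q.mulVec y)) ≤ δ * norm2 y := by
  set b' := ((colSel Sk)ᵀ).mulVec (Q.mulVec y) with hb'
  have hIb : Sparse s ((colSel Sk).mulVec b') := by
    refine ⟨S, hcard, fun i hi => ?_⟩
    rw [colSel_mulVec, dif_neg (fun h => hi (hsub h))]
  have key : norm2 b' ^ 2 = (Q.mulVec y) ⬝ᵥ ((colSel Sk).mulVec b') := by
    rw [norm2_sq]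
    unfold dotProduct
    rw [← sum_dite_mem Sk (fun j => b' j ^ 2)]
    apply Finset.sum_congr rfl
    intro i _
    rw [colSel_mulVec]
    split_ifs with h
    · rw [show b' ⟨i, h⟩ = (Q.mulVec y) i from colSelT_mulVec Sk _ ⟨i, h⟩]; ring
    · simp
  have h := hPA y ((colSel Sk).mulVec b') hIb
  rw [mulVec_norm2 hQ, norm2_colSel] at h
  have h2 : norm2 b' ^ 2 ≤ (δ * norm2 y) * norm2 b' := by
    rw [key]
    calc (Q.mulVec y) ⬝ᵥ ((colSel Sk).mulVec b') ≤ |(Q.mulVec y) ⬝ᵥ ((colSel Sk).mulVec b')| := le_abs_self _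
    _ ≤ δ * norm2 y * norm2 b' := h
  exact cancel_sq (norm2_nonneg _) (mul_nonneg hδ0 (norm2_nonneg _)) h2

lemma prod_bound (hQ : Qᵀ * Q = 1) (hδ0 : 0 ≤ δ) (hPA : PABound Q s δ)
    {S Sk : Finset (Fin n)} (hsub : Sk ⊆ S) (hcard : S.card ≤ s)
    (x : {i // i ∈ Sk} → ℝ) :
    norm2 (((colSel Sk)ᵀ * Q * Qᵀ * colSel Sk).mulVec x) ≤ δ ^ 2 * norm2 x := by
  have hre : ((colSel Sk)ᵀ * Q * Qᵀ * colSel Sk).mulVec x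
      = ((colSel Sk)ᵀ).mulVec (Q.mulVec (Qᵀ.mulVec ((colSel Sk).mulVec x))) := by
    rw [Matrix.mulVec_mulVec, Matrix.mulVec_mulVec, Matrix.mulVec_mulVec]
  rw [hre]
  have hsp : Sparse s ((colSel Sk).mulVec x) := by
    refine ⟨S, hcard, fun i hi => ?_⟩
    rw [colSel_mulVec, dif_neg (fun h => hi (hsub h))]
  calc norm2 (((colSel Sk)ᵀ).mulVec (Q.mulVec (Qᵀ.mulVec ((colSel Sk).mulVec x))))
      ≤ δ * norm2 (Qᵀ.mulVec ((colSel Sk).mulVec x)) := sel_bound hQ hδ0 hPA hsub hcard _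
    _ ≤ δ * (δ * norm2 ((colSel Sk).mulVec x)) := by
        have := qtrans_bound hQ hδ0 hPA hsp
        nlinarith [norm2_nonneg (Qᵀ.mulVec ((colSel Sk).mulVec x))]
    _ = δ ^ 2 * norm2 x := by rw [norm2_colSel]; ring

end PA

end GardAux

set_option maxHeartbeats 1600000 in
/-- Correct selection at every GARD step in the outlier-only case: under the recovery
condition `δ² < min_{i ∈ S} |u₀ᵢ| / (2‖u₀‖₂)`, for every nonempty `S_k ⊊ S` the matrix
`M_k` is invertible and the residual `r = v_k − QQᵀ v_k` satisfies `|rᵢ| > |rⱼ|` for every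
`i ∈ S∖S_k` and `j ∈ Sᶜ`; hence the next selected index belongs to the outlier support. -/
theorem stmt13 {n m s : ℕ} (Q : Matrix (Fin n) (Fin m) ℝ) (hQ : Qᵀ * Q = 1)
    (δ : ℝ) (hδ0 : 0 ≤ δ) (hδ1 : δ ≤ 1) (hPA : PABound Q s δ)
    (u₀ : Fin n → ℝ) (S : Finset (Fin n)) (hsupp : ∀ i, i ∈ S ↔ u₀ i ≠ 0)
    (hSne : S.Nonempty) (hcard : S.card ≤ s)
    (hbound : δ ^ 2 < S.inf' hSne (fun i => |u₀ i|) / (2 * norm2 u₀))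
    (Sk : Finset (Fin n)) (hSkne : Sk.Nonempty) (hSkS : Sk ⊂ S)
    (Mk : Matrix {i // i ∈ Sk} {i // i ∈ Sk} ℝ)
    (hMk : Mk = 1 - (colSel Sk)ᵀ * Q * Qᵀ * colSel Sk)
    (vk : Fin n → ℝ)
    (hvk : vk = restrictVec (S \ Sk) u₀ +
      (colSel Sk).mulVec ((Mk⁻¹).mulVec
        ((colSel Sk)ᵀ.mulVec (Q.mulVec (Qᵀ.mulVec (restrictVec (S \ Sk) u₀))))))
    (r : Fin n → ℝ) (hr : r = vk - Q.mulVec (Qᵀ.mulVec vk)) :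
    IsUnit Mk ∧ ∀ i ∈ S \ Sk, ∀ j ∉ S, |r j| < |r i| := by
  classical
  set e := restrictVec (S \ Sk) u₀ with he
  set b := ((colSel Sk)ᵀ).mulVec (Q.mulVec (Qᵀ.mulVec e)) with hb
  set c := (Mk⁻¹).mulVec b with hc
  set z := (colSel Sk).mulVec c with hz
  set μ := S.inf' hSne (fun i => |u₀ i|) with hμ
  obtain ⟨i₀, hi₀⟩ := hSkne
  have hsubSk : Sk ⊆ S := hSkS.subset
  have hi₀S : i₀ ∈ S := hsubSk hi₀
  have hu₀i₀ : u₀ i₀ ≠ 0 := (hsupp i₀).1 hi₀S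
  have hNpos : 0 < norm2 u₀ := GardAux.norm2_pos hu₀i₀
  have hμpos : 0 < μ := by
    rw [hμ, Finset.lt_inf'_iff]
    intro i hi
    exact abs_pos.2 ((hsupp i).1 hi)
  have hμle : μ ≤ norm2 u₀ :=
    le_trans (Finset.inf'_le _ hi₀S) (GardAux.abs_le_norm2 u₀ i₀)
  have hkey : δ ^ 2 * (2 * norm2 u₀) < μ := by
    have h2 : 0 < 2 * norm2 u₀ := by linarith
    have := mul_lt_mul_of_pos_right hbound h2
    rwa [div_mul_cancel₀ _ (ne_of_gt h2)] at this
  have hδ2 : δ ^ 2 < 1 / 2 := by nlinarith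
  have hs1 : 1 ≤ s := by
    have := Finset.card_pos.2 hSne
    omega
  have hesp : Sparse s e := by
    refine ⟨S, hcard, fun i hi => ?_⟩
    rw [he]
    unfold restrictVec
    exact if_neg (fun h => hi (Finset.sdiff_subset h))
  -- invertibility
  have hdet : IsUnit Mk.det := by
    rw [isUnit_iff_ne_zero]
    intro h0
    obtain ⟨x, hx0, hMx⟩ := Matrix.exists_mulVec_eq_zero_iff.2 h0
    rw [hMk, Matrix.sub_mulVec, Matrix.one_mulVec, sub_eq_zero] at hMx
    have hA := GardAux.prod_bound hQ hδ0 hPA hsubSk hcard x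
    rw [← hMx] at hA
    obtain ⟨i, hxi⟩ := Function.ne_iff.1 hx0
    have hxpos : 0 < norm2 x := GardAux.norm2_pos hxi
    nlinarith
  have hUnit : IsUnit Mk := (Matrix.isUnit_iff_isUnit_det Mk).2 hdet
  -- bound on c
  have hMc : Mk.mulVec c = b := by
    rw [hc, Matrix.mulVec_mulVec, Matrix.mul_nonsing_inv Mk hdet, Matrix.one_mulVec]
  have hceq : c = b + ((colSel Sk)ᵀ * Q * Qᵀ * colSel Sk).mulVec c := by
    rw [hMk, Matrix.sub_mulVec, Matrix.one_mulVec] at hMc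
    rw [← hMc]
    abel
  have hbB : norm2 b ≤ δ ^ 2 * norm2 e := by
    have h1 : norm2 b ≤ δ * norm2 (Qᵀ.mulVec e) :=
      GardAux.sel_bound hQ hδ0 hPA hsubSk hcard _
    have h2 : norm2 (Qᵀ.mulVec e) ≤ δ * norm2 e :=
      GardAux.qtrans_bound hQ hδ0 hPA hesp
    nlinarith [GardAux.norm2_nonneg (Qᵀ.mulVec e)]
  have hcb : norm2 c ≤ norm2 b + δ ^ 2 * norm2 c := by
    calc norm2 c = norm2 (b + ((colSel Sk)ᵀ * Q * Qᵀ * colSel Sk).mulVec c) := by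
          rw [← hceq]
      _ ≤ norm2 b + norm2 (((colSel Sk)ᵀ * Q * Qᵀ * colSel Sk).mulVec c) :=
          GardAux.norm2_add_le _ _
      _ ≤ norm2 b + δ ^ 2 * norm2 c := by
          have := GardAux.prod_bound hQ hδ0 hPA hsubSk hcard c
          linarith
  have hele : norm2 e ≤ norm2 u₀ := by
    apply GardAux.norm2_le_norm2
    apply Finset.sum_le_sum
    intro i _
    rw [he]
    unfold restrictVec
    split_ifs <;> simp [sq_nonneg]
  have hcmin : norm2 c < μ := by
    nlinarith [GardAux.norm2_nonneg c, GardAux.norm2_nonneg b, sq_nonneg δ]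
  -- structure of vk
  have hzi : ∀ i ∉ Sk, z i = 0 := by
    intro i hi
    rw [hz, GardAux.colSel_mulVec, dif_neg hi]
  have hei : ∀ i ∉ S \ Sk, e i = 0 := by
    intro i hi
    rw [he]
    unfold restrictVec
    exact if_neg hi
  have hvkS : ∀ i ∉ S, vk i = 0 := by
    intro i hi
    have h1 : e i = 0 := hei i (fun h => hi (Finset.sdiff_subset h))
    have h2 : z i = 0 := hzi i (fun h => hi (hsubSk h))
    rw [hvk, Pi.add_apply, h1, h2, add_zero]
  have hvksp : Sparse s vk := ⟨S, hcard, hvkS⟩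
  have hvkSd : ∀ i ∈ S \ Sk, vk i = u₀ i := by
    intro i hi
    have h2 : z i = 0 := hzi i (Finset.mem_sdiff.1 hi).2
    rw [hvk, Pi.add_apply, h2, add_zero, he]
    simp [restrictVec, hi]
  have hvkn : norm2 vk ≤ norm2 u₀ := by
    apply GardAux.norm2_le_norm2
    have hzuniv : ∑ i, z i ^ 2 = norm2 c ^ 2 := by
      rw [← GardAux.norm2_sq, hz, GardAux.norm2_colSel]
    have hsplit : ∑ i, vk i ^ 2 = ∑ i ∈ S \ Sk, vk i ^ 2 + ∑ i ∈ Sk, vk i ^ 2 := by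
      rw [Finset.sum_sdiff hsubSk]
      refine (Finset.sum_subset (Finset.subset_univ S) ?_).symm
      intro x _ hx
      rw [hvkS x hx]
      ring
    have hsplit2 : ∑ i, u₀ i ^ 2 = ∑ i ∈ S \ Sk, u₀ i ^ 2 + ∑ i ∈ Sk, u₀ i ^ 2 := by
      rw [Finset.sum_sdiff hsubSk]
      refine (Finset.sum_subset (Finset.subset_univ S) ?_).symm
      intro x _ hx
      rw [of_not_not (fun h => hx ((hsupp x).2 h))]
      ring
    have hSk1 : ∑ i ∈ Sk, vk i ^ 2 = ∑ i ∈ Sk, z i ^ 2 := by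
      apply Finset.sum_congr rfl
      intro i hi
      have h1 : e i = 0 := hei i (fun h => (Finset.mem_sdiff.1 h).2 hi)
      rw [hvk, Pi.add_apply, h1, zero_add]
    have hzsum : ∑ i ∈ Sk, z i ^ 2 = norm2 c ^ 2 := by
      rw [← hzuniv]
      refine Finset.sum_subset (Finset.subset_univ Sk) ?_
      intro x _ hx
      rw [hzi x hx]
      ring
    have hu₀Sk : μ ^ 2 ≤ ∑ i ∈ Sk, u₀ i ^ 2 := by
      have h0 : μ ≤ |u₀ i₀| := Finset.inf'_le _ hi₀S
      have h1 : μ ^ 2 ≤ u₀ i₀ ^ 2 := by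
        nlinarith [sq_abs (u₀ i₀), abs_nonneg (u₀ i₀)]
      exact le_trans h1 (Finset.single_le_sum (fun i _ => sq_nonneg (u₀ i)) hi₀)
    have hsdiff_eq : ∑ i ∈ S \ Sk, vk i ^ 2 = ∑ i ∈ S \ Sk, u₀ i ^ 2 :=
      Finset.sum_congr rfl (fun i hi => by rw [hvkSd i hi])
    have hc2 : norm2 c ^ 2 ≤ μ ^ 2 := by nlinarith [GardAux.norm2_nonneg c]
    rw [hsplit, hsplit2, hsdiff_eq, hSk1, hzsum]
    linarith
  have hQtvk : norm2 (Qᵀ.mulVec vk) ≤ δ * norm2 vk :=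
    GardAux.qtrans_bound hQ hδ0 hPA hvksp
  have hPcomp : ∀ a : Fin n, |(Q.mulVec (Qᵀ.mulVec vk)) a| ≤ δ ^ 2 * norm2 u₀ := by
    intro a
    calc |(Q.mulVec (Qᵀ.mulVec vk)) a|
        ≤ δ * norm2 (Qᵀ.mulVec vk) := GardAux.component_bound hQ hPA hs1 _ a
      _ ≤ δ * (δ * norm2 vk) := mul_le_mul_of_nonneg_left hQtvk hδ0
      _ = δ ^ 2 * norm2 vk := by ring
      _ ≤ δ ^ 2 * norm2 u₀ := mul_le_mul_of_nonneg_left hvkn (sq_nonneg δ)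
  refine ⟨hUnit, ?_⟩
  intro i hiS j hjS
  have hrj : |r j| ≤ δ ^ 2 * norm2 u₀ := by
    rw [hr, Pi.sub_apply, hvkS j hjS, zero_sub, abs_neg]
    exact hPcomp j
  have hri : μ - δ ^ 2 * norm2 u₀ ≤ |r i| := by
    have h1 : r i = u₀ i - (Q.mulVec (Qᵀ.mulVec vk)) i := by
      rw [hr, Pi.sub_apply, hvkSd i hiS]
    have h2 : |u₀ i| - |(Q.mulVec (Qᵀ.mulVec vk)) i| ≤ |r i| := by
      rw [h1]
      exact abs_sub_abs_le_abs_sub _ _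
    have h3 : μ ≤ |u₀ i| := Finset.inf'_le _ (Finset.mem_sdiff.1 hiS).1
    have h4 := hPcomp i
    linarith
  have hkey2 : δ ^ 2 * norm2 u₀ + δ ^ 2 * norm2 u₀ < μ := by nlinarith [hkey]
  linarith
end

section
/- Bound on the first-step replacement coefficient: let Q ∈ ℝ^{n×m} have orthonormal columns (QᵀQ = Iₘ), let u₀ ∈ ℝⁿ be s-sparse with support S, let δ ∈ [0,1] satisfy the principal-angle bound for sparsity level s with δ² < min{|u₀ₗ| : l ∈ S} / (2 ‖u₀‖₂), and let j₁ ∈ S. Set β = 1 − ‖Qᵀ e_{j₁}‖₂² and γ₁ = e_{j₁}ᵀ Q Qᵀ F_{S∖{j₁}}(u₀) / β. Then β > 1/2 and |γ₁| < |u₀_{j₁}|. -/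
open Matrix

lemma dot_self_eq {ι : Type*} [Fintype ι] (v : ι → ℝ) : v ⬝ᵥ v = norm2 v ^ 2 := by
  rw [norm2_sq']; simp [dotProduct, sq]

lemma dot_QQ {n m : ℕ} (Q : Matrix (Fin n) (Fin m) ℝ) (hQ : Qᵀ * Q = 1)
    (x y : Fin m → ℝ) : Q.mulVec x ⬝ᵥ Q.mulVec y = x ⬝ᵥ y := by
  rw [dotProduct_mulVec, ← mulVec_transpose, mulVec_mulVec, hQ, one_mulVec]

lemma norm2_mulVec {n m : ℕ} (Q : Matrix (Fin n) (Fin m) ℝ) (hQ : Qᵀ * Q = 1)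
    (x : Fin m → ℝ) : norm2 (Q.mulVec x) = norm2 x := by
  have h := dot_QQ Q hQ x x
  rw [dot_self_eq, dot_self_eq] at h
  have := norm2_nonneg' (Q.mulVec x)
  have := norm2_nonneg' x
  nlinarith

lemma key_lemma {n m s : ℕ} (Q : Matrix (Fin n) (Fin m) ℝ) (hQ : Qᵀ * Q = 1)
    (δ : ℝ) (hδ0 : 0 ≤ δ) (hPA : PABound Q s δ) (v : Fin n → ℝ) (hv : Sparse s v) :
    norm2 (Qᵀ.mulVec v) ≤ δ * norm2 v := by
  set q := Qᵀ.mulVec v with hq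
  have h := hPA q v hv
  have hd : Q.mulVec q ⬝ᵥ v = norm2 q ^ 2 := by
    rw [dotProduct_comm, dotProduct_mulVec, ← mulVec_transpose, ← hq, dot_self_eq]
  rw [hd, norm2_mulVec Q hQ] at h
  rcases eq_or_lt_of_le (norm2_nonneg' q) with h0 | h0
  · rw [← h0]; exact mul_nonneg hδ0 (norm2_nonneg' v)
  · have := abs_of_nonneg (sq_nonneg (norm2 q))
    rw [abs_of_nonneg (sq_nonneg _)] at h
    nlinarith


/-- Bound on the first-step replacement coefficient: for `j₁ ∈ S`, with
`β = 1 − ‖Qᵀ e_{j₁}‖₂²` and `γ₁ = e_{j₁}ᵀ Q Qᵀ F_{S∖{j₁}}(u₀) / β`, under the recovery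
condition `δ² < min_{l ∈ S} |u₀ₗ| / (2‖u₀‖₂)` one has `β > 1/2` and `|γ₁| < |u₀_{j₁}|`. -/
theorem stmt14 {n m s : ℕ} (Q : Matrix (Fin n) (Fin m) ℝ) (hQ : Qᵀ * Q = 1)
    (δ : ℝ) (hδ0 : 0 ≤ δ) (hδ1 : δ ≤ 1) (hPA : PABound Q s δ)
    (u₀ : Fin n → ℝ) (S : Finset (Fin n)) (hsupp : ∀ i, i ∈ S ↔ u₀ i ≠ 0)
    (hSne : S.Nonempty) (hcard : S.card ≤ s)
    (hbound : δ ^ 2 < S.inf' hSne (fun i => |u₀ i|) / (2 * norm2 u₀))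
    (j₁ : Fin n) (hj₁ : j₁ ∈ S)
    (β : ℝ) (hβ : β = 1 - norm2 (Qᵀ.mulVec (Pi.single j₁ (1 : ℝ))) ^ 2)
    (γ₁ : ℝ)
    (hγ₁ : γ₁ = (Pi.single j₁ (1 : ℝ) ⬝ᵥ
        Q.mulVec (Qᵀ.mulVec (restrictVec (S \ {j₁}) u₀))) / β) :
    1 / 2 < β ∧ |γ₁| < |u₀ j₁| := by
  have hu₀j : u₀ j₁ ≠ 0 := (hsupp j₁).1 hj₁
  have hsum_pos : 0 < ∑ i, u₀ i ^ 2 :=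
    Finset.sum_pos' (fun i _ => sq_nonneg _) ⟨j₁, Finset.mem_univ _, by positivity⟩
  have hnu : 0 < norm2 u₀ := Real.sqrt_pos.2 hsum_pos
  have habs : ∀ i, |u₀ i| ≤ norm2 u₀ := fun i => by
    rw [← Real.sqrt_sq_eq_abs, norm2]
    exact Real.sqrt_le_sqrt
      (Finset.single_le_sum (fun i _ => sq_nonneg (u₀ i)) (Finset.mem_univ i))
  set M := S.inf' hSne (fun i => |u₀ i|) with hM
  have hM_le : M ≤ |u₀ j₁| := Finset.inf'_le _ hj₁
  have hM_le_norm : M ≤ norm2 u₀ := hM_le.trans (habs j₁)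
  have hδ2 : δ ^ 2 < 1 / 2 := by
    refine lt_of_lt_of_le hbound ?_
    rw [div_le_iff₀ (by positivity)]
    nlinarith
  have hs1 : 1 ≤ s := le_trans (Finset.Nonempty.card_pos hSne) hcard
  have hes : Sparse s (Pi.single j₁ (1 : ℝ)) :=
    ⟨{j₁}, by simpa using hs1, fun i hi => by rw [Pi.single_eq_of_ne (show i ≠ j₁ by simpa using hi)]⟩
  have hne : norm2 (Pi.single j₁ (1 : ℝ)) = 1 := by
    rw [norm2]
    have h1 : ∑ i, (Pi.single (M := fun _ : Fin n => ℝ) j₁ 1) i ^ 2 = 1 := by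
      simp [Pi.single_apply, sq]
    rw [h1, Real.sqrt_one]
  have ht : norm2 (Qᵀ.mulVec (Pi.single j₁ (1 : ℝ))) ≤ δ := by
    have := key_lemma Q hQ δ hδ0 hPA _ hes
    rwa [hne, mul_one] at this
  have ht0 : 0 ≤ norm2 (Qᵀ.mulVec (Pi.single j₁ (1 : ℝ))) := norm2_nonneg' _
  have hβhalf : 1 / 2 < β := by rw [hβ]; nlinarith
  refine ⟨hβhalf, ?_⟩
  set r := restrictVec (S \ {j₁}) u₀ with hr
  have hrs : Sparse s r := by
    refine ⟨S \ {j₁}, le_trans (Finset.card_le_card (Finset.sdiff_subset)) hcard,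
      fun i hi => ?_⟩
    simp only [hr, restrictVec, if_neg hi]
  have hnr : norm2 r ≤ norm2 u₀ := by
    apply Real.sqrt_le_sqrt
    apply Finset.sum_le_sum
    intro i _
    simp only [hr, restrictVec]
    split
    · exact le_rfl
    · simpa using sq_nonneg (u₀ i)
  have h1 := hPA (Qᵀ.mulVec r) (Pi.single j₁ (1:ℝ)) hes
  rw [norm2_mulVec Q hQ, hne, mul_one] at h1
  have h2 := key_lemma Q hQ δ hδ0 hPA r hrs
  set num := Pi.single j₁ (1 : ℝ) ⬝ᵥ Q.mulVec (Qᵀ.mulVec r) with hnum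
  have hnum_eq : |num| = |Q.mulVec (Qᵀ.mulVec r) ⬝ᵥ Pi.single j₁ (1 : ℝ)| := by
    rw [hnum, dotProduct_comm]
  have hnum_le : |num| ≤ δ ^ 2 * norm2 u₀ := by
    rw [hnum_eq]
    calc |Q.mulVec (Qᵀ.mulVec r) ⬝ᵥ Pi.single j₁ (1 : ℝ)|
        ≤ δ * norm2 (Qᵀ.mulVec r) := h1
      _ ≤ δ * (δ * norm2 r) := by nlinarith [norm2_nonneg' r]
      _ ≤ δ ^ 2 * norm2 u₀ := by nlinarith
  have hbound' : δ ^ 2 * norm2 u₀ < M / 2 := by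
    have := (lt_div_iff₀ (by positivity)).1 hbound
    nlinarith
  have hnum_lt : |num| < |u₀ j₁| / 2 := by
    calc |num| ≤ δ ^ 2 * norm2 u₀ := hnum_le
      _ < M / 2 := hbound'
      _ ≤ |u₀ j₁| / 2 := by linarith
  have hβpos : 0 < β := by linarith
  rw [hγ₁, abs_div, abs_of_pos hβpos]
  rw [div_lt_iff₀ hβpos]
  have hupos : 0 < |u₀ j₁| := abs_pos.2 hu₀j
  nlinarith
end
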